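/- arXiv:1205.1966 — 7 statements merged into one kernel-verified Lean document; each statement's English description precedes it below -/
import Mathlib

section
/- Let 𝔄 = (𝒜_t)_{t≥0} be a filtration on a probability space (Ω, 𝓕, ℙ) and ρ: Ω → [0,∞]. For all real numbers 0 ≤ s ≤ t one has 𝒢^ρ_{t−s} = 𝒢^{ρ+s}_t and 𝒜^ρ_{t−s} ⊆ 𝒜^{ρ+s}_t. -/
open MeasureTheory Set Filter
open scoped ENNReal NNReal

noncomputable section

variable {Ω : Type*}

/-- `𝒢^ρ`: the smallest filtration making the `[0,∞]`-valued map `ρ` a stopping time,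
`𝒢^ρ_t = σ({ρ ≤ s} : s ≤ t)`. -/
def genFilt (ρ : Ω → ℝ≥0∞) (t : ℝ≥0) : MeasurableSpace Ω :=
  MeasurableSpace.generateFrom {A | ∃ s : ℝ≥0, s ≤ t ∧ A = {ω | ρ ω ≤ (s : ℝ≥0∞)}}

/-- `𝔄^ρ`: the smallest right-continuous filtration containing `𝔄` for which `ρ` is a
stopping time, i.e. the right-continuous regularization of `t ↦ σ(𝒜_t, 𝒢^ρ_t)`. -/
def rcEnlarge (𝔄 : ℝ≥0 → MeasurableSpace Ω) (ρ : Ω → ℝ≥0∞) (t : ℝ≥0) :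
    MeasurableSpace Ω :=
  ⨅ s ∈ Set.Ioi t, (𝔄 s ⊔ genFilt ρ s)

/-- Iterated enlargement `𝔄^{ρ₀,…,ρ_{i-1}}`. -/
def enrichedFilt (𝔄 : ℝ≥0 → MeasurableSpace Ω) (ρ : ℕ → Ω → ℝ≥0∞) :
    ℕ → ℝ≥0 → MeasurableSpace Ω
  | 0 => 𝔄
  | i + 1 => rcEnlarge (enrichedFilt 𝔄 ρ i) (ρ i)

/-- `ρ : Ω → [0,∞]` is a stopping time with respect to the filtration `𝔄 = (𝒜_t)_{t ≥ 0}`. -/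
def IsStoppingTimeE (𝔄 : ℝ≥0 → MeasurableSpace Ω) (ρ : Ω → ℝ≥0∞) : Prop :=
  ∀ t : ℝ≥0, MeasurableSet[𝔄 t] {ω | ρ ω ≤ (t : ℝ≥0∞)}

/-- The σ-algebra `𝒜_ρ` of events prior to the random time `ρ`. -/
def sigmaAt (𝔄 : ℝ≥0 → MeasurableSpace Ω) (ρ : Ω → ℝ≥0∞) : MeasurableSpace Ω :=
  MeasurableSpace.generateFrom
    {A | ∀ t : ℝ≥0, MeasurableSet[𝔄 t] (A ∩ {ω | ρ ω ≤ (t : ℝ≥0∞)})}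

/-- Evaluation `Y(τ)` of a process at a `[0,∞]`-valued random time, with the convention
`Y(∞) := limsup_{t→∞} Y(t)`. -/
def evalAt (Y : ℝ≥0 → Ω → ℝ) (τ : Ω → ℝ≥0∞) (ω : Ω) : ℝ :=
  if τ ω ≠ ∞ then Y (τ ω).toNNReal ω
  else limsup (fun t : ℝ≥0 => Y t ω) atTop

/-- Right-continuity of a filtration. -/
def RightContinuousFilt (𝔄 : ℝ≥0 → MeasurableSpace Ω) : Prop :=
  ∀ t : ℝ≥0, 𝔄 t = ⨅ s ∈ Set.Ioi t, 𝔄 s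

variable {m0 : MeasurableSpace Ω}

/-- `Z` is (a version of) the essential supremum of the family of random variables `F`. -/
def IsEssSupFam (μ : Measure Ω) (F : Set (Ω → ℝ)) (Z : Ω → ℝ) : Prop :=
  (∀ f ∈ F, f ≤ᵐ[μ] Z) ∧ ∀ g : Ω → ℝ, (∀ f ∈ F, f ≤ᵐ[μ] g) → Z ≤ᵐ[μ] g

/-- The set of strategies `𝒮^n_σ(δ, 𝔄)` (0-indexed: `τ 0` is the first exercise `τ₁`,
`δ 0` is the first waiting time `δ₁`). -/
def IsStrategy (𝔄 : ℝ≥0 → MeasurableSpace Ω) (δ : ℕ → Ω → ℝ≥0∞) (n : ℕ)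
    (σ : Ω → ℝ≥0∞) (τ : ℕ → Ω → ℝ≥0∞) : Prop :=
  IsStoppingTimeE 𝔄 (τ 0) ∧ (∀ ω, σ ω ≤ τ 0 ω) ∧
    ∀ i : ℕ, i + 1 < n →
      IsStoppingTimeE (enrichedFilt 𝔄 (fun j ω => τ j ω + δ j ω) (i + 1)) (τ (i + 1)) ∧
      ∀ ω, τ i ω + δ i ω ≤ τ (i + 1) ω

/-- `Σ_{i=1}^n Y(τ_i)`. -/
def rewardSum (Y : ℝ≥0 → Ω → ℝ) (n : ℕ) (τ : ℕ → Ω → ℝ≥0∞) (ω : Ω) : ℝ :=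
  ∑ i ∈ Finset.range n, evalAt Y (τ i) ω

/-- The family of random variables whose essential supremum is `Z_n^{δ,𝔄}(σ)`. -/
def gainFam (μ : Measure Ω) (Y : ℝ≥0 → Ω → ℝ) (𝔄 : ℝ≥0 → MeasurableSpace Ω)
    (δ : ℕ → Ω → ℝ≥0∞) (n : ℕ) (σ : Ω → ℝ≥0∞) : Set (Ω → ℝ) :=
  {g | ∃ τ : ℕ → Ω → ℝ≥0∞, IsStrategy 𝔄 δ n σ τ ∧
    g = μ[rewardSum Y n τ | sigmaAt 𝔄 σ]}

/-- The family of random variables whose essential supremum is `Z_n^{δ,𝔄}(σ)_disc`. -/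
def gainFamDisc (μ : Measure Ω) (Y : ℝ≥0 → Ω → ℝ) (𝔄 : ℝ≥0 → MeasurableSpace Ω)
    (δ : ℕ → Ω → ℝ≥0∞) (n : ℕ) (σ : Ω → ℝ≥0∞) : Set (Ω → ℝ) :=
  {g | ∃ τ : ℕ → Ω → ℝ≥0∞, IsStrategy 𝔄 δ n σ τ ∧ (Set.range (τ 0)).Countable ∧
    g = μ[rewardSum Y n τ | sigmaAt 𝔄 σ]}

/-- The hitting time `ρ_τ^B = inf{t > τ : X(t) ∈ B}` of `B` strictly after the random time `τ`. -/
def hitAfterE (X : ℝ≥0 → Ω → ℝ) (B : Set ℝ) (τ : Ω → ℝ≥0∞) (ω : Ω) : ℝ≥0∞ :=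
  ⨅ u ∈ {u : ℝ≥0 | τ ω < (u : ℝ≥0∞) ∧ X u ω ∈ B}, (u : ℝ≥0∞)

/-- The set of strategies `𝒮^n_σ(B)` of the second model. -/
def IsStrategyB (𝔉 : ℝ≥0 → MeasurableSpace Ω) (X : ℝ≥0 → Ω → ℝ) (B : ℕ → Set ℝ)
    (n : ℕ) (σ : Ω → ℝ≥0∞) (τ : ℕ → Ω → ℝ≥0∞) : Prop :=
  (∀ i < n, IsStoppingTimeE 𝔉 (τ i)) ∧ (∀ ω, σ ω ≤ τ 0 ω) ∧
    ∀ i : ℕ, i + 1 < n → ∀ ω, hitAfterE X (B i) (τ i) ω ≤ τ (i + 1) ω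

/-- The family of random variables whose essential supremum is `Z_n^B(σ)` (second model). -/
def gainFamB (μ : Measure Ω) (Y : ℝ≥0 → Ω → ℝ) (𝔉 : ℝ≥0 → MeasurableSpace Ω)
    (X : ℝ≥0 → Ω → ℝ) (B : ℕ → Set ℝ) (n : ℕ) (σ : Ω → ℝ≥0∞) : Set (Ω → ℝ) :=
  {g | ∃ τ : ℕ → Ω → ℝ≥0∞, IsStrategyB 𝔉 X B n σ τ ∧
    g = μ[rewardSum Y n τ | sigmaAt 𝔉 σ]}


lemma genFilt_shift (ρ : Ω → ℝ≥0∞) (s t : ℝ≥0) (hst : s ≤ t) :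
    genFilt ρ (t - s) = genFilt (fun ω => ρ ω + (s : ℝ≥0∞)) t := by
  apply le_antisymm
  · apply MeasurableSpace.generateFrom_le
    rintro A ⟨u, hu, rfl⟩
    have hus : u + s ≤ t := by
      rw [← tsub_add_cancel_of_le hst]
      exact add_le_add_left hu s
    have : {ω | ρ ω ≤ (u : ℝ≥0∞)} = {ω | ρ ω + (s : ℝ≥0∞) ≤ ((u + s : ℝ≥0) : ℝ≥0∞)} := by
      ext ω
      simp only [Set.mem_setOf_eq, ENNReal.coe_add]
      exact (ENNReal.add_le_add_iff_right ENNReal.coe_ne_top).symm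
    rw [this]
    exact MeasurableSpace.measurableSet_generateFrom ⟨u + s, hus, rfl⟩
  · apply MeasurableSpace.generateFrom_le
    rintro A ⟨u, hu, rfl⟩
    rcases le_or_gt s u with h | h
    · have : {ω | ρ ω + (s : ℝ≥0∞) ≤ (u : ℝ≥0∞)} = {ω | ρ ω ≤ ((u - s : ℝ≥0) : ℝ≥0∞)} := by
        ext ω
        simp only [Set.mem_setOf_eq, ENNReal.coe_sub]
        exact ((ENNReal.cancel_of_ne ENNReal.coe_ne_top).le_tsub_iff_right (by exact_mod_cast h)).symm
      rw [this]
      exact MeasurableSpace.measurableSet_generateFrom ⟨u - s, tsub_le_tsub_right hu s, rfl⟩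
    · have : {ω | ρ ω + (s : ℝ≥0∞) ≤ (u : ℝ≥0∞)} = ∅ := by
        ext ω
        simp only [Set.mem_setOf_eq, Set.mem_empty_iff_false, iff_false]
        intro hc
        exact absurd (le_trans (le_add_self) hc) (by exact_mod_cast not_le.mpr h)
      rw [this]
      exact @MeasurableSet.empty Ω (genFilt ρ (t - s))

/-- For `0 ≤ s ≤ t` one has `𝒢^ρ_{t-s} = 𝒢^{ρ+s}_t` and
`𝒜^ρ_{t-s} ⊆ 𝒜^{ρ+s}_t`. -/
theorem genFilt_sub_eq_and_rcEnlarge_sub_le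
    (μ : Measure Ω) [IsProbabilityMeasure μ]
    (𝔄 : ℝ≥0 → MeasurableSpace Ω) (hle : ∀ t, 𝔄 t ≤ m0) (hmono : Monotone 𝔄)
    (ρ : Ω → ℝ≥0∞) (s t : ℝ≥0) (hst : s ≤ t) :
    genFilt ρ (t - s) = genFilt (fun ω => ρ ω + (s : ℝ≥0∞)) t ∧
      rcEnlarge 𝔄 ρ (t - s) ≤ rcEnlarge 𝔄 (fun ω => ρ ω + (s : ℝ≥0∞)) t := by
  refine ⟨genFilt_shift ρ s t hst, ?_⟩
  refine le_iInf₂ fun r hr => ?_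
  have hr' : t < r := hr
  have hsr : s ≤ r := hst.trans hr'.le
  have h1 : t - s < r - s := tsub_lt_tsub_right_of_le hst hr'
  calc rcEnlarge 𝔄 ρ (t - s) ≤ 𝔄 (r - s) ⊔ genFilt ρ (r - s) := iInf₂_le (r - s) h1
    _ ≤ 𝔄 r ⊔ genFilt (fun ω => ρ ω + (s : ℝ≥0∞)) r := by
        rw [genFilt_shift ρ s r hsr]
        exact sup_le_sup_right (hmono (tsub_le_self)) _

end
end

section
/- Let 𝔄 = (𝒜_t)_{t≥0} be a filtration on a probability space (Ω, 𝓕, ℙ), ρ: Ω → [0,∞], and let σ and τ be 𝔄-stopping times. Then for every t ≥ 0, 𝒜^{σ+ρ}_t |_{{σ=τ}} = 𝒜^{τ+ρ}_t |_{{σ=τ}}, where for a σ-algebra 𝒞 and a set D ⊆ Ω one writes 𝒞|_D := {C ∩ D : C ∈ 𝒞}. -/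
open MeasureTheory Set Filter
open scoped ENNReal NNReal

noncomputable section

variable {Ω : Type*}

variable {m0 : MeasurableSpace Ω}

/-- The trace σ-algebra `𝒞|_D = {C ∩ D : C ∈ 𝒞}`. -/
def restrictSets (m : MeasurableSpace Ω) (D : Set Ω) : Set (Set Ω) :=
  {A | ∃ C : Set Ω, MeasurableSet[m] C ∧ A = C ∩ D}


section Aux

variable {Ω : Type*}

private lemma inter_eq_inter_iff {A C D : Set Ω} :
    A ∩ D = C ∩ D ↔ ∀ ω ∈ D, ω ∈ A ↔ ω ∈ C := by
  constructor
  · intro h ω hω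
    have h1 := Set.ext_iff.mp h ω
    simp only [Set.mem_inter_iff, hω, and_true] at h1
    exact h1
  · intro h
    ext ω
    simp only [Set.mem_inter_iff]
    constructor
    · rintro ⟨h1, h2⟩; exact ⟨(h ω h2).mp h1, h2⟩
    · rintro ⟨h1, h2⟩; exact ⟨(h ω h2).mpr h1, h2⟩

private lemma ms_mono {m m' : MeasurableSpace Ω} (h : m ≤ m') {A : Set Ω}
    (hA : MeasurableSet[m] A) : MeasurableSet[m'] A := h _ hA

/-- Trace σ-algebra as a `MeasurableSpace`. -/
private def traceMS (m : MeasurableSpace Ω) (D : Set Ω) : MeasurableSpace Ω where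
  MeasurableSet' A := ∃ C, MeasurableSet[m] C ∧ A ∩ D = C ∩ D
  measurableSet_empty := ⟨∅, MeasurableSet.empty, rfl⟩
  measurableSet_compl := by
    rintro A ⟨C, hC, hAC⟩
    refine ⟨Cᶜ, hC.compl, ?_⟩
    rw [inter_eq_inter_iff] at hAC ⊢
    intro ω hω
    simpa using not_congr (hAC ω hω)
  measurableSet_iUnion := by
    intro f hf
    choose C hC hCD using hf
    refine ⟨⋃ n, C n, MeasurableSet.iUnion hC, ?_⟩
    rw [inter_eq_inter_iff]
    intro ω hω
    simp only [Set.mem_iUnion]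
    exact exists_congr fun n => (inter_eq_inter_iff.mp (hCD n)) ω hω

private lemma genFilt_mono (ρ : Ω → ℝ≥0∞) : Monotone (genFilt ρ) := by
  intro u v huv
  apply MeasurableSpace.generateFrom_mono
  rintro A ⟨s, hs, rfl⟩
  exact ⟨s, hs.trans huv, rfl⟩

private lemma trace_at_time (m : MeasurableSpace Ω) (σ τ ρ : Ω → ℝ≥0∞) (s : ℝ≥0)
    {A : Set Ω} (hA : MeasurableSet[m ⊔ genFilt (fun ω => σ ω + ρ ω) s] A) :
    ∃ C, MeasurableSet[m ⊔ genFilt (fun ω => τ ω + ρ ω) s] C ∧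
      A ∩ {ω | σ ω = τ ω} = C ∩ {ω | σ ω = τ ω} := by
  have hle : m ⊔ genFilt (fun ω => σ ω + ρ ω) s ≤
      traceMS (m ⊔ genFilt (fun ω => τ ω + ρ ω) s) {ω | σ ω = τ ω} := by
    apply sup_le
    · intro B hB
      exact ⟨B, ms_mono le_sup_left hB, rfl⟩
    · apply MeasurableSpace.generateFrom_le
      rintro B ⟨u, hu, rfl⟩
      refine ⟨{ω | τ ω + ρ ω ≤ (u : ℝ≥0∞)},
        ms_mono le_sup_right (MeasurableSpace.measurableSet_generateFrom ⟨u, hu, rfl⟩), ?_⟩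
      rw [inter_eq_inter_iff]
      intro ω hω
      simp only [Set.mem_setOf_eq] at hω ⊢
      rw [hω]
  exact hle _ hA

private lemma rcEnlarge_restrict_subset
    (𝔄 : ℝ≥0 → MeasurableSpace Ω) (hmono : Monotone 𝔄)
    (σ τ ρ : Ω → ℝ≥0∞) (t : ℝ≥0) :
    restrictSets (rcEnlarge 𝔄 (fun ω => σ ω + ρ ω) t) {ω | σ ω = τ ω} ⊆
      restrictSets (rcEnlarge 𝔄 (fun ω => τ ω + ρ ω) t) {ω | σ ω = τ ω} := by
  rintro A ⟨B, hB, rfl⟩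
  set D := {ω | σ ω = τ ω} with hD
  have hB' : ∀ s ∈ Set.Ioi t, MeasurableSet[𝔄 s ⊔ genFilt (fun ω => σ ω + ρ ω) s] B := by
    intro s hs
    exact ms_mono (biInf_le _ hs) hB
  set sn : ℕ → ℝ≥0 := fun n => t + ((n : ℝ≥0) + 1)⁻¹ with hsn_def
  have hsn : ∀ n, sn n ∈ Set.Ioi t := by
    intro n
    simp only [Set.mem_Ioi, hsn_def]
    exact lt_add_of_pos_right _ (by positivity)
  have hCex : ∀ n, ∃ C, MeasurableSet[𝔄 (sn n) ⊔ genFilt (fun ω => τ ω + ρ ω) (sn n)] C ∧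
      B ∩ D = C ∩ D :=
    fun n => trace_at_time (𝔄 (sn n)) σ τ ρ (sn n) (hB' (sn n) (hsn n))
  choose C hC hCD using hCex
  set E : ℕ → Set Ω := fun N => ⋂ k, C (N + k) with hE_def
  have hEmono : Monotone E := by
    apply monotone_nat_of_le_succ
    intro N
    apply Set.iInter_mono'
    intro k
    exact ⟨k + 1, by rw [show N + (k + 1) = N + 1 + k by omega]⟩
  refine ⟨⋃ N, E N, ?_, ?_⟩
  · rw [rcEnlarge, MeasurableSpace.measurableSet_iInf]
    intro s
    rw [MeasurableSpace.measurableSet_iInf]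
    intro hs
    obtain ⟨N₀, hN₀⟩ := exists_nat_gt (((s : ℝ) - t)⁻¹)
    have hts : (t : ℝ) < s := by exact_mod_cast hs
    have hsnle : ∀ n, N₀ ≤ n → sn n ≤ s := by
      intro n hn
      rw [hsn_def]
      have h1 : ((s : ℝ) - t)⁻¹ < (n : ℝ) + 1 := by
        refine hN₀.trans_le ?_
        have hcast : (N₀ : ℝ) ≤ n := by exact_mod_cast hn
        linarith
      have h2 : ((n : ℝ) + 1)⁻¹ ≤ (s : ℝ) - t := by
        rw [inv_le_comm₀ (by positivity) (by linarith)]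
        exact h1.le
      rw [← NNReal.coe_le_coe]
      push_cast
      linarith
    have hshift : (⋃ N, E N) = ⋃ n, E (N₀ + n) := by
      apply Set.Subset.antisymm
      · exact Set.iUnion_mono' fun N => ⟨N, hEmono (Nat.le_add_left N N₀)⟩
      · exact Set.iUnion_mono' fun n => ⟨N₀ + n, Set.Subset.rfl⟩
    rw [hshift]
    apply MeasurableSet.iUnion
    intro n
    apply MeasurableSet.iInter
    intro k
    have hle2 : 𝔄 (sn (N₀ + n + k)) ⊔ genFilt (fun ω => τ ω + ρ ω) (sn (N₀ + n + k)) ≤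
        𝔄 s ⊔ genFilt (fun ω => τ ω + ρ ω) s :=
      sup_le_sup (hmono (hsnle _ (by omega))) (genFilt_mono _ (hsnle _ (by omega)))
    exact ms_mono hle2 (hC _)
  · rw [Set.iUnion_inter]
    have hEN : ∀ N, E N ∩ D = B ∩ D := by
      intro N
      rw [hE_def]
      simp only
      rw [Set.iInter_inter]
      simp only [← hCD]
      exact Set.iInter_const _
    simp only [hEN, Set.iUnion_const]
end Aux

/-- For `𝔄`-stopping times `σ, τ` and any `ρ : Ω → [0,∞]`,
`𝒜^{σ+ρ}_t |_{{σ=τ}} = 𝒜^{τ+ρ}_t |_{{σ=τ}}` for every `t ≥ 0`. -/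
theorem rcEnlarge_restrict_eq_on_agreement
    (μ : Measure Ω) [IsProbabilityMeasure μ]
    (𝔄 : ℝ≥0 → MeasurableSpace Ω) (hle : ∀ t, 𝔄 t ≤ m0) (hmono : Monotone 𝔄)
    (σ τ : Ω → ℝ≥0∞) (hσ : IsStoppingTimeE 𝔄 σ) (hτ : IsStoppingTimeE 𝔄 τ)
    (ρ : Ω → ℝ≥0∞) (t : ℝ≥0) :
    restrictSets (rcEnlarge 𝔄 (fun ω => σ ω + ρ ω) t) {ω | σ ω = τ ω} =
      restrictSets (rcEnlarge 𝔄 (fun ω => τ ω + ρ ω) t) {ω | σ ω = τ ω} := by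
  apply Set.Subset.antisymm
  · exact rcEnlarge_restrict_subset 𝔄 hmono σ τ ρ t
  · have h := rcEnlarge_restrict_subset 𝔄 hmono τ σ ρ t
    have hD : {ω | τ ω = σ ω} = {ω | σ ω = τ ω} := by
      ext ω; exact eq_comm
    rwa [hD] at h

end
end

section
/- Let 𝔄 = (𝒜_t)_{t≥0} be a filtration on a probability space (Ω, 𝓕, ℙ), ρ: Ω → [0,∞], and let σ ≤ τ be 𝔄-stopping times whose ranges are countable. Then for every t ≥ 0, 𝒜^{σ+ρ}_t ⊇ 𝒜^{τ+ρ}_t. -/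
open MeasureTheory Set Filter
open scoped ENNReal NNReal

noncomputable section

variable {Ω : Type*}

variable {m0 : MeasurableSpace Ω}

/-- Auxiliary: for a stopping time with countable range, `{σ ≤ x}` is `𝒜_s`-measurable
for `x ≤ s`. -/
lemma aux_le_meas (𝔄 : ℝ≥0 → MeasurableSpace Ω) (hmono : Monotone 𝔄)
    (σ : Ω → ℝ≥0∞) (hσ : IsStoppingTimeE 𝔄 σ) (s : ℝ≥0) (x : ℝ≥0∞) (hx : x ≤ (s : ℝ≥0∞)) :
    MeasurableSet[𝔄 s] {ω | σ ω ≤ x} := by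
  have hxt : x ≠ ∞ := ne_top_of_le_ne_top ENNReal.coe_ne_top hx
  have hx' : ((x.toNNReal : ℝ≥0∞)) = x := ENNReal.coe_toNNReal hxt
  have hxs : x.toNNReal ≤ s := by
    rw [← ENNReal.coe_le_coe, hx']; exact hx
  have := hσ x.toNNReal
  rw [hx'] at this
  exact hmono hxs _ this

/-- Auxiliary: for a stopping time with countable range, `{σ = x}` is `𝒜_s`-measurable
for `x ≤ s`. -/
lemma aux_eq_meas (𝔄 : ℝ≥0 → MeasurableSpace Ω) (hmono : Monotone 𝔄)
    (σ : Ω → ℝ≥0∞) (hσ : IsStoppingTimeE 𝔄 σ) (hσc : (Set.range σ).Countable)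
    (s : ℝ≥0) (x : ℝ≥0∞) (hx : x ≤ (s : ℝ≥0∞)) :
    MeasurableSet[𝔄 s] {ω | σ ω = x} := by
  have hlt : MeasurableSet[𝔄 s] {ω | σ ω < x} := by
    have hset : {ω | σ ω < x} = ⋃ c ∈ (Set.range σ ∩ Set.Iio x), {ω | σ ω ≤ c} := by
      ext ω
      simp only [Set.mem_setOf_eq, Set.mem_iUnion, Set.mem_inter_iff, Set.mem_range,
        Set.mem_Iio]
      constructor
      · intro h; exact ⟨σ ω, ⟨⟨ω, rfl⟩, h⟩, le_rfl⟩
      · rintro ⟨c, ⟨_, hc⟩, hωc⟩; exact lt_of_le_of_lt hωc hc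
    rw [hset]
    exact MeasurableSet.biUnion (hσc.mono Set.inter_subset_left)
      (fun c hc => aux_le_meas 𝔄 hmono σ hσ s c (le_trans (le_of_lt hc.2) hx))
  have hset : {ω | σ ω = x} = {ω | σ ω ≤ x} \ {ω | σ ω < x} := by
    ext ω; simp [le_antisymm_iff, not_lt, Set.mem_setOf_eq, and_comm]
  rw [hset]
  exact (aux_le_meas 𝔄 hmono σ hσ s x hx).diff hlt

/-- For `𝔄`-stopping times `σ ≤ τ` with countable range and any
`ρ : Ω → [0,∞]`, one has `𝒜^{σ+ρ}_t ⊇ 𝒜^{τ+ρ}_t` for every `t ≥ 0`. -/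
theorem rcEnlarge_antitone_of_le_countable_range
    (μ : Measure Ω) [IsProbabilityMeasure μ]
    (𝔄 : ℝ≥0 → MeasurableSpace Ω) (hle : ∀ t, 𝔄 t ≤ m0) (hmono : Monotone 𝔄)
    (σ τ : Ω → ℝ≥0∞) (hσ : IsStoppingTimeE 𝔄 σ) (hτ : IsStoppingTimeE 𝔄 τ)
    (hστ : ∀ ω, σ ω ≤ τ ω)
    (hσc : (Set.range σ).Countable) (hτc : (Set.range τ).Countable)
    (ρ : Ω → ℝ≥0∞) (t : ℝ≥0) :
    rcEnlarge 𝔄 (fun ω => τ ω + ρ ω) t ≤ rcEnlarge 𝔄 (fun ω => σ ω + ρ ω) t := by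
  refine le_iInf₂ fun s hs => iInf₂_le_of_le s hs ?_
  refine sup_le le_sup_left ?_
  refine MeasurableSpace.generateFrom_le ?_
  rintro A ⟨u, hus, rfl⟩
  set M : MeasurableSpace Ω := 𝔄 s ⊔ genFilt (fun ω => σ ω + ρ ω) s with hM
  have h𝔄M : (𝔄 s : MeasurableSpace Ω) ≤ M := le_sup_left
  have hgM : genFilt (fun ω => σ ω + ρ ω) s ≤ M := le_sup_right
  have key : {ω | τ ω + ρ ω ≤ (u : ℝ≥0∞)} =
      ⋃ p ∈ ((Set.range σ ×ˢ Set.range τ) ∩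
        {p : ℝ≥0∞ × ℝ≥0∞ | p.1 ≤ p.2 ∧ p.2 ≤ (u : ℝ≥0∞)}),
        ({ω | σ ω = p.1} ∩ {ω | τ ω = p.2} ∩
          {ω | σ ω + ρ ω ≤ p.1 + ((u : ℝ≥0∞) - p.2)}) := by
    ext ω
    simp only [Set.mem_setOf_eq, Set.mem_iUnion, Set.mem_inter_iff, Set.mem_prod,
      Set.mem_range]
    constructor
    · intro h
      refine ⟨(σ ω, τ ω), ⟨⟨⟨ω, rfl⟩, ⟨ω, rfl⟩⟩, hστ ω, le_trans le_self_add h⟩,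
        ⟨rfl, rfl⟩, ?_⟩
      exact add_le_add_right (ENNReal.le_sub_of_add_le_left (ne_top_of_le_ne_top ENNReal.coe_ne_top (le_trans le_self_add h)) h) _
    · rintro ⟨p, ⟨⟨_, _⟩, hab, hbu⟩, ⟨ha, hb⟩, hineq⟩
      have hp1 : p.1 ≠ ∞ :=
        ne_top_of_le_ne_top ENNReal.coe_ne_top (le_trans hab hbu)
      rw [ha] at hineq
      have hρ : ρ ω ≤ (u : ℝ≥0∞) - p.2 := by
        exact (ENNReal.add_le_add_iff_left hp1).mp hineq
      calc τ ω + ρ ω ≤ p.2 + ((u : ℝ≥0∞) - p.2) := add_le_add hb.le hρ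
        _ = (u : ℝ≥0∞) := add_tsub_cancel_of_le hbu
  rw [key]
  refine MeasurableSet.biUnion (((hσc.prod hτc).mono Set.inter_subset_left)) ?_
  rintro p ⟨-, hab, hbu⟩
  have hbs : p.2 ≤ (s : ℝ≥0∞) := le_trans hbu (ENNReal.coe_le_coe.mpr hus)
  have has : p.1 ≤ (s : ℝ≥0∞) := le_trans hab hbs
  have h1 : MeasurableSet[M] {ω | σ ω = p.1} :=
    h𝔄M _ (aux_eq_meas 𝔄 hmono σ hσ hσc s p.1 has)
  have h2 : MeasurableSet[M] {ω | τ ω = p.2} :=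
    h𝔄M _ (aux_eq_meas 𝔄 hmono τ hτ hτc s p.2 hbs)
  have h3 : MeasurableSet[M] {ω | σ ω + ρ ω ≤ p.1 + ((u : ℝ≥0∞) - p.2)} := by
    have hp2 : p.2 ≠ ∞ := ne_top_of_le_ne_top ENNReal.coe_ne_top hbu
    have hp1 : p.1 ≠ ∞ := ne_top_of_le_ne_top hp2 hab
    set r : ℝ≥0 := p.1.toNNReal + (u - p.2.toNNReal) with hr
    have hco : ((r : ℝ≥0∞)) = p.1 + ((u : ℝ≥0∞) - p.2) := by
      rw [hr, ENNReal.coe_add, ENNReal.coe_sub, ENNReal.coe_toNNReal hp1,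
        ENNReal.coe_toNNReal hp2]
    have hb'u : p.2.toNNReal ≤ u := by
      rw [← ENNReal.coe_le_coe, ENNReal.coe_toNNReal hp2]; exact hbu
    have ha'b' : p.1.toNNReal ≤ p.2.toNNReal := by
      rw [← ENNReal.coe_le_coe, ENNReal.coe_toNNReal hp1, ENNReal.coe_toNNReal hp2]
      exact hab
    have hrs : r ≤ s := by
      calc r ≤ p.2.toNNReal + (u - p.2.toNNReal) := add_le_add_left ha'b' _
        _ = u := add_tsub_cancel_of_le hb'u
        _ ≤ s := hus
    refine hgM _ (MeasurableSpace.measurableSet_generateFrom ⟨r, hrs, ?_⟩)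
    ext ω; simp [hco]
  exact (h1.inter h2).inter h3

end
end

section
/- Let τ be an 𝔉-stopping time, λ ≥ 0, and (τ₂,…,τ_n) ∈ 𝒮^{n−1}_{τ+δ₁}(Lδ, 𝔉^{τ+δ₁}). Then the tuple (τ₂ 1_{{τ=λ}} + (λ+δ₁) 1_{{τ≠λ}}, …, τ_n 1_{{τ=λ}} + (λ+δ₁+⋯+δ_{n−1}) 1_{{τ≠λ}}) belongs to 𝒮^{n−1}_{λ+δ₁}(Lδ, 𝔉^{λ+δ₁}). -/
open MeasureTheory Set Filter
open scoped ENNReal NNReal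

noncomputable section

variable {Ω : Type*}

variable {m0 : MeasurableSpace Ω}

namespace StratTransferAux

variable {Ω : Type*}

lemma measurableSet_rcEnlarge_iff {𝔄 : ℝ≥0 → MeasurableSpace Ω} {ρ : Ω → ℝ≥0∞} {t : ℝ≥0}
    {A : Set Ω} :
    MeasurableSet[rcEnlarge 𝔄 ρ t] A ↔ ∀ s, t < s → MeasurableSet[𝔄 s ⊔ genFilt ρ s] A := by
  unfold rcEnlarge
  simp only [MeasurableSpace.measurableSet_iInf, Set.mem_Ioi]

lemma rcEnlarge_mono {𝔄 : ℝ≥0 → MeasurableSpace Ω} {ρ : Ω → ℝ≥0∞} :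
    Monotone (rcEnlarge 𝔄 ρ) := fun t1 t2 h =>
  le_iInf₂ fun s hs => iInf₂_le s (lt_of_le_of_lt h hs)

lemma genFilt_mono {ρ : Ω → ℝ≥0∞} : Monotone (genFilt ρ) := fun t1 t2 h =>
  MeasurableSpace.generateFrom_mono (fun A => fun ⟨s, hs, hA⟩ => ⟨s, hs.trans h, hA⟩)

lemma self_le_rcEnlarge {𝔄 : ℝ≥0 → MeasurableSpace Ω} (hmono : Monotone 𝔄) (ρ : Ω → ℝ≥0∞)
    (t : ℝ≥0) : 𝔄 t ≤ rcEnlarge 𝔄 ρ t :=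
  le_iInf₂ fun s hs => le_trans (hmono (le_of_lt hs)) le_sup_left

lemma genFilt_le_rcEnlarge {𝔄 : ℝ≥0 → MeasurableSpace Ω} (ρ : Ω → ℝ≥0∞) (t : ℝ≥0) :
    genFilt ρ t ≤ rcEnlarge 𝔄 ρ t :=
  le_iInf₂ fun s hs => le_trans (genFilt_mono (le_of_lt hs)) le_sup_right

lemma enrichedFilt_mono {𝔄 : ℝ≥0 → MeasurableSpace Ω} {ρ : ℕ → Ω → ℝ≥0∞} (hmono : Monotone 𝔄) :
    ∀ m, Monotone (enrichedFilt 𝔄 ρ m)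
  | 0 => hmono
  | _ + 1 => rcEnlarge_mono

lemma le_enrichedFilt {𝔄 : ℝ≥0 → MeasurableSpace Ω} {ρ : ℕ → Ω → ℝ≥0∞} (hmono : Monotone 𝔄) :
    ∀ m t, 𝔄 t ≤ enrichedFilt 𝔄 ρ m t
  | 0, _ => le_rfl
  | m + 1, t =>
    (le_enrichedFilt hmono m t).trans (self_le_rcEnlarge (enrichedFilt_mono hmono m) _ t)

/-- The σ-algebra of sets whose trace on `E` is `N`-measurable. -/
def traceSA (E : Set Ω) (N : MeasurableSpace Ω) (hE : MeasurableSet[N] E) :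
    MeasurableSpace Ω where
  MeasurableSet' A := MeasurableSet[N] (E ∩ A)
  measurableSet_empty := by simp
  measurableSet_compl A hA := by
    have h : E ∩ Aᶜ = E ∩ (E ∩ A)ᶜ := by
      ext ω; by_cases hω : ω ∈ E <;> simp [hω]
    show MeasurableSet[N] (E ∩ Aᶜ)
    rw [h]; exact hE.inter (MeasurableSet.compl (hA : MeasurableSet[N] (E ∩ A)))
  measurableSet_iUnion f hf := by
    show MeasurableSet[N] (E ∩ ⋃ i, f i)
    rw [Set.inter_iUnion]
    exact MeasurableSet.iUnion fun i => (hf i : MeasurableSet[N] (E ∩ f i))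

/-- Trace compatibility of a pair of filtrations from time `l` on. -/
def TrProp (E : Set Ω) (l : ℝ≥0) (M N : ℝ≥0 → MeasurableSpace Ω) : Prop :=
  ∀ t : ℝ≥0, l ≤ t → ∀ A : Set Ω, MeasurableSet[M t] A → MeasurableSet[N t] (E ∩ A)

lemma TrProp.rcEnlarge_step {E : Set Ω} {l : ℝ≥0} {M N : ℝ≥0 → MeasurableSpace Ω}
    (h : TrProp E l M N) {ρ' ρ : Ω → ℝ≥0∞} (hagree : ∀ ω ∈ E, ρ' ω = ρ ω) :
    TrProp E l (rcEnlarge M ρ') (rcEnlarge N ρ) := by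
  intro t ht A hA
  rw [measurableSet_rcEnlarge_iff] at hA ⊢
  intro s hs
  have hls : l ≤ s := ht.trans hs.le
  have hEN : MeasurableSet[N s] E := by
    simpa using h s hls Set.univ MeasurableSet.univ
  have hE : MeasurableSet[N s ⊔ genFilt ρ s] E := (le_sup_left : N s ≤ _) _ hEN
  have key : M s ⊔ genFilt ρ' s ≤ traceSA E (N s ⊔ genFilt ρ s) hE := by
    apply sup_le
    · intro B hB
      exact (le_sup_left : N s ≤ _) _ (h s hls B hB)
    · apply MeasurableSpace.generateFrom_le
      rintro B ⟨u, hu, rfl⟩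
      show MeasurableSet[N s ⊔ genFilt ρ s] (E ∩ {ω | ρ' ω ≤ (u : ℝ≥0∞)})
      have hEq : E ∩ {ω | ρ' ω ≤ (u : ℝ≥0∞)} = E ∩ {ω | ρ ω ≤ (u : ℝ≥0∞)} := by
        ext ω
        simp only [Set.mem_inter_iff, Set.mem_setOf_eq]
        exact and_congr_right fun hω => by rw [hagree ω hω]
      rw [hEq]
      exact hE.inter ((le_sup_right : genFilt ρ s ≤ _) _
        (MeasurableSpace.measurableSet_generateFrom ⟨u, hu, rfl⟩))
  exact key _ (hA s hs)

lemma measurableSet_eq_const {𝔉 : ℝ≥0 → MeasurableSpace Ω} (hmono : Monotone 𝔉)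
    {τ : Ω → ℝ≥0∞} (hτ : IsStoppingTimeE 𝔉 τ) (l : ℝ≥0) :
    MeasurableSet[𝔉 l] {ω | τ ω = (l : ℝ≥0∞)} := by
  have hlt : MeasurableSet[𝔉 l] {ω | τ ω < (l : ℝ≥0∞)} := by
    have hU : {ω | τ ω < (l : ℝ≥0∞)} =
        ⋃ q : {q : ℚ // (Real.toNNReal q : ℝ≥0∞) < (l : ℝ≥0∞)},
          {ω | τ ω ≤ ((Real.toNNReal q.1 : ℝ≥0) : ℝ≥0∞)} := by
      ext ω
      simp only [Set.mem_setOf_eq, Set.mem_iUnion]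
      constructor
      · intro hω
        obtain ⟨q, _, h1, h2⟩ := ENNReal.lt_iff_exists_rat_btwn.mp hω
        exact ⟨⟨q, h2⟩, h1.le⟩
      · rintro ⟨⟨q, hq⟩, hle⟩
        exact lt_of_le_of_lt hle hq
    rw [hU]
    exact MeasurableSet.iUnion fun q =>
      hmono (ENNReal.coe_le_coe.mp q.2.le) _ (hτ _)
  have heq : {ω | τ ω = (l : ℝ≥0∞)} =
      {ω | τ ω ≤ (l : ℝ≥0∞)} ∩ {ω | τ ω < (l : ℝ≥0∞)}ᶜ := by
    ext ω
    simp only [Set.mem_setOf_eq, Set.mem_inter_iff, Set.mem_compl_iff, not_lt]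
    constructor
    · intro h; exact ⟨h.le, h.ge⟩
    · rintro ⟨h1, h2⟩; exact h1.antisymm h2
  rw [heq]
  exact (hτ l).inter hlt.compl

end StratTransferAux

open StratTransferAux

/-- If `τ` is an `𝔉`-stopping time, `λ ≥ 0` and
`(τ₂,…,τ_n) ∈ 𝒮^{n-1}_{τ+δ₁}(Lδ, 𝔉^{τ+δ₁})`, then
`(τ₂ 1_{τ=λ} + (λ+δ₁) 1_{τ≠λ}, …, τ_n 1_{τ=λ} + (λ+δ₁+⋯+δ_{n-1}) 1_{τ≠λ})`
belongs to `𝒮^{n-1}_{λ+δ₁}(Lδ, 𝔉^{λ+δ₁})`. -/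
theorem strategy_transfer_to_constant_time
    (μ : Measure Ω) [IsProbabilityMeasure μ]
    (𝔉 : ℝ≥0 → MeasurableSpace Ω) (hle : ∀ t, 𝔉 t ≤ m0) (hmono : Monotone 𝔉)
    (hrc : RightContinuousFilt 𝔉)
    (hnull : ∀ A : Set Ω, μ A = 0 → MeasurableSet[𝔉 0] A)
    (n : ℕ) (hn : 2 ≤ n) (δ : ℕ → Ω → ℝ≥0∞)
    (hδfin : ∀ i, i + 1 < n → ∀ᵐ ω ∂μ, δ i ω < ∞)
    (τ : Ω → ℝ≥0∞) (hτ : IsStoppingTimeE 𝔉 τ) (l : ℝ≥0)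
    (p : ℕ → Ω → ℝ≥0∞)
    (hp : IsStrategy (rcEnlarge 𝔉 (fun ω => τ ω + δ 0 ω)) (fun i => δ (i + 1)) (n - 1)
      (fun ω => τ ω + δ 0 ω) p) :
    IsStrategy (rcEnlarge 𝔉 (fun ω => (l : ℝ≥0∞) + δ 0 ω)) (fun i => δ (i + 1)) (n - 1)
      (fun ω => (l : ℝ≥0∞) + δ 0 ω)
      (fun j ω => if τ ω = (l : ℝ≥0∞) then p j ω
        else (l : ℝ≥0∞) + ∑ k ∈ Finset.range (j + 1), δ k ω) := by
  classical
  set E : Set Ω := {ω | τ ω = (l : ℝ≥0∞)} with hE_def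
  have hEl : MeasurableSet[𝔉 l] E := measurableSet_eq_const hmono hτ l
  set q : ℕ → Ω → ℝ≥0∞ := fun j ω => if τ ω = (l : ℝ≥0∞) then p j ω
    else (l : ℝ≥0∞) + ∑ k ∈ Finset.range (j + 1), δ k ω with hq_def
  have hBmono : Monotone (rcEnlarge 𝔉 (fun ω => (l : ℝ≥0∞) + δ 0 ω)) := rcEnlarge_mono
  -- trace compatibility between the two towers of filtrations
  have htr : ∀ m, TrProp E l
      (enrichedFilt (rcEnlarge 𝔉 (fun ω => τ ω + δ 0 ω)) (fun j ω => p j ω + δ (j + 1) ω) m)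
      (enrichedFilt (rcEnlarge 𝔉 (fun ω => (l : ℝ≥0∞) + δ 0 ω))
        (fun j ω => q j ω + δ (j + 1) ω) m) := by
    intro m
    induction m with
    | zero =>
      have base : TrProp E l 𝔉 𝔉 := by
        intro t ht A hA
        exact (hmono ht _ hEl).inter hA
      exact base.rcEnlarge_step fun ω hω => by
        have hω' : τ ω = (l : ℝ≥0∞) := hω
        simp [hω']
    | succ m ih =>
      exact ih.rcEnlarge_step fun ω hω => by
        have hω' : τ ω = (l : ℝ≥0∞) := hω
        simp [hq_def, hω']
  -- lower bounds
  have hplb : ∀ j, j < n - 1 → ∀ ω, τ ω + δ 0 ω ≤ p j ω := by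
    intro j
    induction j with
    | zero => exact fun _ ω => hp.2.1 ω
    | succ j ih =>
      intro hj ω
      exact ((ih (Nat.lt_of_succ_lt hj) ω).trans (self_le_add_right _ _)).trans
        ((hp.2.2 j hj).2 ω)
  have hql : ∀ j, j < n - 1 → ∀ ω, (l : ℝ≥0∞) ≤ q j ω := by
    intro j hj ω
    by_cases hω : τ ω = (l : ℝ≥0∞)
    · simp only [hq_def, if_pos hω]
      calc (l : ℝ≥0∞) = τ ω := hω.symm
        _ ≤ τ ω + δ 0 ω := self_le_add_right _ _
        _ ≤ p j ω := hplb j hj ω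
    · simp only [hq_def, if_neg hω]
      exact self_le_add_right _ _
  have h0n : 0 < n - 1 := by omega
  refine ⟨?_, ?_, ?_⟩
  · -- q 0 is a stopping time of 𝔉^{l+δ₁}
    intro t
    show MeasurableSet[rcEnlarge 𝔉 (fun ω => (l : ℝ≥0∞) + δ 0 ω) t] {ω | q 0 ω ≤ (t : ℝ≥0∞)}
    by_cases hlt : t < l
    · have hempty : {ω | q 0 ω ≤ (t : ℝ≥0∞)} = ∅ := by
        apply Set.eq_empty_iff_forall_notMem.mpr
        intro ω hω
        exact absurd ((hql 0 h0n ω).trans hω) (not_le.mpr (ENNReal.coe_lt_coe.mpr hlt))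
      rw [hempty]
      exact (rcEnlarge 𝔉 (fun ω => (l : ℝ≥0∞) + δ 0 ω) t).measurableSet_empty
    · push_neg at hlt
      have hsplit : {ω | q 0 ω ≤ (t : ℝ≥0∞)} =
          (E ∩ {ω | p 0 ω ≤ (t : ℝ≥0∞)}) ∪
            (Eᶜ ∩ {ω | (l : ℝ≥0∞) + δ 0 ω ≤ (t : ℝ≥0∞)}) := by
        ext ω
        by_cases hω : τ ω = (l : ℝ≥0∞) <;>
          simp [hq_def, hE_def, hω, Finset.sum_range_one]
      rw [hsplit]
      have h1 : MeasurableSet[rcEnlarge 𝔉 (fun ω => (l : ℝ≥0∞) + δ 0 ω) t]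
          (E ∩ {ω | p 0 ω ≤ (t : ℝ≥0∞)}) := htr 0 t hlt _ (hp.1 t)
      have h2 : MeasurableSet[rcEnlarge 𝔉 (fun ω => (l : ℝ≥0∞) + δ 0 ω) t] E :=
        self_le_rcEnlarge hmono _ t _ (hmono hlt _ hEl)
      have h3 : MeasurableSet[rcEnlarge 𝔉 (fun ω => (l : ℝ≥0∞) + δ 0 ω) t]
          {ω | (l : ℝ≥0∞) + δ 0 ω ≤ (t : ℝ≥0∞)} :=
        genFilt_le_rcEnlarge _ t _
          (MeasurableSpace.measurableSet_generateFrom ⟨t, le_rfl, rfl⟩)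
      exact h1.union (h2.compl.inter h3)
  · -- lower bound for q 0
    intro ω
    show (l : ℝ≥0∞) + δ 0 ω ≤ q 0 ω
    by_cases hω : τ ω = (l : ℝ≥0∞)
    · simp only [hq_def, if_pos hω]
      calc (l : ℝ≥0∞) + δ 0 ω = τ ω + δ 0 ω := by rw [hω]
        _ ≤ p 0 ω := hp.2.1 ω
    · simp [hq_def, hω, Finset.sum_range_one]
  · -- induction levels
    intro i hi
    constructor
    · intro t
      show MeasurableSet[enrichedFilt (rcEnlarge 𝔉 (fun ω => (l : ℝ≥0∞) + δ 0 ω))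
          (fun j ω => q j ω + δ (j + 1) ω) (i + 1) t] {ω | q (i + 1) ω ≤ (t : ℝ≥0∞)}
      by_cases hlt : t < l
      · have hempty : {ω | q (i + 1) ω ≤ (t : ℝ≥0∞)} = ∅ := by
          apply Set.eq_empty_iff_forall_notMem.mpr
          intro ω hω
          exact absurd ((hql (i + 1) hi ω).trans hω)
            (not_le.mpr (ENNReal.coe_lt_coe.mpr hlt))
        rw [hempty]
        exact (enrichedFilt (rcEnlarge 𝔉 (fun ω => (l : ℝ≥0∞) + δ 0 ω))
          (fun j ω => q j ω + δ (j + 1) ω) (i + 1) t).measurableSet_empty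
      · push_neg at hlt
        have hsplit : {ω | q (i + 1) ω ≤ (t : ℝ≥0∞)} =
            (E ∩ {ω | p (i + 1) ω ≤ (t : ℝ≥0∞)}) ∪
              (Eᶜ ∩ {ω | q i ω + δ (i + 1) ω ≤ (t : ℝ≥0∞)}) := by
          ext ω
          by_cases hω : τ ω = (l : ℝ≥0∞) <;>
            simp [hq_def, hE_def, hω, Finset.sum_range_succ, add_assoc]
        rw [hsplit]
        have h1 := htr (i + 1) t hlt _ ((hp.2.2 i hi).1 t)
        have h2 : MeasurableSet[enrichedFilt (rcEnlarge 𝔉 (fun ω => (l : ℝ≥0∞) + δ 0 ω))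
            (fun j ω => q j ω + δ (j + 1) ω) (i + 1) t] E :=
          le_enrichedFilt hBmono (i + 1) t _ (self_le_rcEnlarge hmono _ t _ (hmono hlt _ hEl))
        have h3 : MeasurableSet[enrichedFilt (rcEnlarge 𝔉 (fun ω => (l : ℝ≥0∞) + δ 0 ω))
            (fun j ω => q j ω + δ (j + 1) ω) (i + 1) t]
            {ω | q i ω + δ (i + 1) ω ≤ (t : ℝ≥0∞)} :=
          genFilt_le_rcEnlarge _ t _
            (MeasurableSpace.measurableSet_generateFrom ⟨t, le_rfl, rfl⟩)
        exact h1.union (h2.compl.inter h3)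
    · intro ω
      show q i ω + δ (i + 1) ω ≤ q (i + 1) ω
      by_cases hω : τ ω = (l : ℝ≥0∞)
      · simp only [hq_def, if_pos hω]
        exact (hp.2.2 i hi).2 ω
      · simp only [hq_def, if_neg hω]
        simp [Finset.sum_range_succ, add_assoc]


end
end

section
/- Let τ be an 𝔉-stopping time, λ ≥ 0, and (τ₂,…,τ_n) ∈ 𝒮^{n−1}_{λ+δ₁}(Lδ, 𝔉^{λ+δ₁}). Then the tuple (τ₂ 1_{{τ=λ}} + (τ+δ₁) 1_{{τ≠λ}}, …, τ_n 1_{{τ=λ}} + (τ+δ₁+⋯+δ_{n−1}) 1_{{τ≠λ}}) belongs to 𝒮^{n−1}_{τ+δ₁}(Lδ, 𝔉^{τ+δ₁}). -/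
open MeasureTheory Set Filter
open scoped ENNReal NNReal

noncomputable section

variable {Ω : Type*}

variable {m0 : MeasurableSpace Ω}

lemma measurableSet_genFilt {ρ : Ω → ℝ≥0∞} {s t : ℝ≥0} (h : s ≤ t) :
    MeasurableSet[genFilt ρ t] {ω | ρ ω ≤ (s : ℝ≥0∞)} :=
  MeasurableSpace.measurableSet_generateFrom ⟨s, h, rfl⟩

lemma measurableSet_rcEnlarge_iff {𝔄 : ℝ≥0 → MeasurableSpace Ω} {ρ : Ω → ℝ≥0∞} {t : ℝ≥0}
    {A : Set Ω} :
    MeasurableSet[rcEnlarge 𝔄 ρ t] A ↔ ∀ s, t < s → MeasurableSet[𝔄 s ⊔ genFilt ρ s] A := by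
  unfold rcEnlarge
  simp only [MeasurableSpace.measurableSet_iInf, Set.mem_Ioi]

lemma rcEnlarge_self {𝔄 : ℝ≥0 → MeasurableSpace Ω} {ρ : Ω → ℝ≥0∞} (t : ℝ≥0) :
    MeasurableSet[rcEnlarge 𝔄 ρ t] {ω | ρ ω ≤ (t : ℝ≥0∞)} := by
  rw [measurableSet_rcEnlarge_iff]
  intro s hs
  exact (le_sup_right : genFilt ρ s ≤ _) _ (measurableSet_genFilt hs.le)

lemma rcEnlarge_mono {𝔄 : ℝ≥0 → MeasurableSpace Ω} {ρ : Ω → ℝ≥0∞} :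
    Monotone (rcEnlarge 𝔄 ρ) := by
  intro t1 t2 h
  exact le_iInf₂ fun s hs => iInf₂_le s (lt_of_le_of_lt h hs)

lemma le_rcEnlarge {𝔄 : ℝ≥0 → MeasurableSpace Ω} {ρ : Ω → ℝ≥0∞} (hm : Monotone 𝔄) (t : ℝ≥0) :
    𝔄 t ≤ rcEnlarge 𝔄 ρ t :=
  le_iInf₂ fun s hs => le_trans (hm hs.le) le_sup_left

lemma enriched_mono {𝔄 : ℝ≥0 → MeasurableSpace Ω} (h : Monotone 𝔄) (ρ : ℕ → Ω → ℝ≥0∞) :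
    ∀ i, Monotone (enrichedFilt 𝔄 ρ i)
  | 0 => h
  | _ + 1 => rcEnlarge_mono

lemma le_enriched {𝔄 : ℝ≥0 → MeasurableSpace Ω} (h : Monotone 𝔄) (ρ : ℕ → Ω → ℝ≥0∞) :
    ∀ i t, 𝔄 t ≤ enrichedFilt 𝔄 ρ i t
  | 0, _ => le_rfl
  | i + 1, t => (le_enriched h ρ i t).trans (le_rcEnlarge (enriched_mono h ρ i) t)

def traceSpace (P : MeasurableSpace Ω) (D : Set Ω) (hD : MeasurableSet[P] D) :
    MeasurableSpace Ω where
  MeasurableSet' B := MeasurableSet[P] (B ∩ D)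
  measurableSet_empty := by simpa using (@MeasurableSet.empty _ P)
  measurableSet_compl B hB := by
    have h2 : Bᶜ ∩ D = D \ (B ∩ D) := by
      ext ω; by_cases hω : ω ∈ D <;> simp [hω]
    show MeasurableSet[P] (Bᶜ ∩ D)
    rw [h2]; exact hD.diff hB
  measurableSet_iUnion f hf := by
    show MeasurableSet[P] ((⋃ i, f i) ∩ D)
    rw [Set.iUnion_inter]; exact MeasurableSet.iUnion hf

lemma measurableSet_traceSpace {P : MeasurableSpace Ω} {D : Set Ω} {hD : MeasurableSet[P] D}
    {B : Set Ω} : MeasurableSet[traceSpace P D hD] B ↔ MeasurableSet[P] (B ∩ D) := Iff.rfl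

lemma trace_step {F' F : ℝ≥0 → MeasurableSpace Ω} {ρ' ρ : Ω → ℝ≥0∞} {D : Set Ω} {l : ℝ≥0}
    (hTr : ∀ t, l ≤ t → ∀ A : Set Ω, MeasurableSet[F' t] A → MeasurableSet[F t] (A ∩ D))
    (hD : ∀ s, l ≤ s → MeasurableSet[F s] D)
    (hρ : ∀ ω ∈ D, ρ' ω = ρ ω) :
    ∀ t, l ≤ t → ∀ A : Set Ω, MeasurableSet[rcEnlarge F' ρ' t] A →
      MeasurableSet[rcEnlarge F ρ t] (A ∩ D) := by
  intro t ht A hA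
  rw [measurableSet_rcEnlarge_iff] at hA ⊢
  intro s hs
  have hls : l ≤ s := ht.trans hs.le
  set P := F s ⊔ genFilt ρ s with hP
  have hDP : MeasurableSet[P] D := (le_sup_left : F s ≤ P) _ (hD s hls)
  set m : MeasurableSpace Ω := traceSpace P D hDP with hm
  have h1 : F' s ≤ m := by
    rw [MeasurableSpace.le_def]
    intro B hB
    exact measurableSet_traceSpace.mpr ((le_sup_left : F s ≤ P) _ (hTr s hls B hB))
  have h2 : genFilt ρ' s ≤ m := by
    apply MeasurableSpace.generateFrom_le
    rintro B ⟨u, hu, rfl⟩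
    rw [measurableSet_traceSpace]
    have he : {ω | ρ' ω ≤ (u : ℝ≥0∞)} ∩ D = {ω | ρ ω ≤ (u : ℝ≥0∞)} ∩ D := by
      ext ω
      simp only [Set.mem_inter_iff, Set.mem_setOf_eq]
      exact and_congr_left fun hω => by rw [hρ ω hω]
    rw [he]
    exact ((le_sup_right : genFilt ρ s ≤ P) _ (measurableSet_genFilt hu)).inter
      (hD s hls |> (le_sup_left : F s ≤ P) _)
  exact measurableSet_traceSpace.mp ((sup_le h1 h2 : F' s ⊔ genFilt ρ' s ≤ m) A (hA s hs))

lemma eq_meas {𝔉 : ℝ≥0 → MeasurableSpace Ω} (hmono : Monotone 𝔉) {τ : Ω → ℝ≥0∞}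
    (hτ : ∀ t : ℝ≥0, MeasurableSet[𝔉 t] {ω | τ ω ≤ (t : ℝ≥0∞)}) (l : ℝ≥0) :
    MeasurableSet[𝔉 l] {ω | τ ω = (l : ℝ≥0∞)} := by
  have h2 : MeasurableSet[𝔉 l] {ω | τ ω < (l : ℝ≥0∞)} := by
    have he : {ω | τ ω < (l : ℝ≥0∞)} =
        ⋃ (q : ℚ), ⋃ (_ : ((q : ℝ).toNNReal : ℝ≥0∞) < (l : ℝ≥0∞)),
          {ω | τ ω ≤ (((q : ℝ).toNNReal : ℝ≥0) : ℝ≥0∞)} := by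
      ext ω
      simp only [Set.mem_iUnion, Set.mem_setOf_eq]
      constructor
      · intro h
        obtain ⟨q, _, h1, h2⟩ := ENNReal.lt_iff_exists_rat_btwn.mp h
        exact ⟨q, h2, h1.le⟩
      · rintro ⟨q, h1, h2⟩
        exact lt_of_le_of_lt h2 h1
    rw [he]
    apply MeasurableSet.iUnion
    intro q
    apply MeasurableSet.iUnion
    intro hq
    have hql : ((q : ℝ).toNNReal : ℝ≥0) ≤ l := by exact_mod_cast hq.le
    exact hmono hql _ (hτ _)
  have he : {ω | τ ω = (l : ℝ≥0∞)} = {ω | τ ω ≤ (l : ℝ≥0∞)} \ {ω | τ ω < (l : ℝ≥0∞)} := by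
    ext ω
    simp only [Set.mem_setOf_eq, Set.mem_diff, not_lt]
    constructor
    · intro h; exact ⟨h.le, h.ge⟩
    · intro ⟨h1, h2⟩; exact le_antisymm h1 h2
  rw [he]
  exact (hτ l).diff h2


/-- If `τ` is an `𝔉`-stopping time, `λ ≥ 0` and
`(τ₂,…,τ_n) ∈ 𝒮^{n-1}_{λ+δ₁}(Lδ, 𝔉^{λ+δ₁})`, then
`(τ₂ 1_{τ=λ} + (τ+δ₁) 1_{τ≠λ}, …, τ_n 1_{τ=λ} + (τ+δ₁+⋯+δ_{n-1}) 1_{τ≠λ})`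
belongs to `𝒮^{n-1}_{τ+δ₁}(Lδ, 𝔉^{τ+δ₁})`. -/
theorem strategy_transfer_from_constant_time
    (μ : Measure Ω) [IsProbabilityMeasure μ]
    (𝔉 : ℝ≥0 → MeasurableSpace Ω) (hle : ∀ t, 𝔉 t ≤ m0) (hmono : Monotone 𝔉)
    (hrc : RightContinuousFilt 𝔉)
    (hnull : ∀ A : Set Ω, μ A = 0 → MeasurableSet[𝔉 0] A)
    (n : ℕ) (hn : 2 ≤ n) (δ : ℕ → Ω → ℝ≥0∞)
    (hδfin : ∀ i, i + 1 < n → ∀ᵐ ω ∂μ, δ i ω < ∞)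
    (τ : Ω → ℝ≥0∞) (hτ : IsStoppingTimeE 𝔉 τ) (l : ℝ≥0)
    (p : ℕ → Ω → ℝ≥0∞)
    (hp : IsStrategy (rcEnlarge 𝔉 (fun ω => (l : ℝ≥0∞) + δ 0 ω)) (fun i => δ (i + 1)) (n - 1)
      (fun ω => (l : ℝ≥0∞) + δ 0 ω) p) :
    IsStrategy (rcEnlarge 𝔉 (fun ω => τ ω + δ 0 ω)) (fun i => δ (i + 1)) (n - 1)
      (fun ω => τ ω + δ 0 ω)
      (fun j ω => if τ ω = (l : ℝ≥0∞) then p j ω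
        else τ ω + ∑ k ∈ Finset.range (j + 1), δ k ω) := by
  obtain ⟨hp0, hp0le, hpstep⟩ := hp
  have hDl : MeasurableSet[𝔉 l] {ω | τ ω = (l : ℝ≥0∞)} := eq_meas hmono hτ l
  have hDt : ∀ t, l ≤ t → MeasurableSet[𝔉 t] {ω | τ ω = (l : ℝ≥0∞)} :=
    fun t ht => hmono ht _ hDl
  have hlp : ∀ j, j < n - 1 → ∀ ω, (l : ℝ≥0∞) + δ 0 ω ≤ p j ω := by
    intro j
    induction j with
    | zero => exact fun _ ω => hp0le ω
    | succ j ih =>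
      intro hj ω
      exact ((ih (Nat.lt_of_succ_lt hj) ω).trans (self_le_add_right _ _)).trans
        ((hpstep j hj).2 ω)
  have hl : ∀ j, j < n - 1 → ∀ ω, (l : ℝ≥0∞) ≤ p j ω := fun j hj ω =>
    le_trans (self_le_add_right _ _) (hlp j hj ω)
  -- notation
  set G : ℝ≥0 → MeasurableSpace Ω := rcEnlarge 𝔉 (fun ω => τ ω + δ 0 ω) with hGdef
  have hGmono : Monotone G := rcEnlarge_mono
  have hFG : ∀ t, 𝔉 t ≤ G t := fun t => le_rcEnlarge hmono t
  set G' : ℝ≥0 → MeasurableSpace Ω := rcEnlarge 𝔉 (fun ω => (l : ℝ≥0∞) + δ 0 ω) with hG'def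
  set q : ℕ → Ω → ℝ≥0∞ := fun j ω => if τ ω = (l : ℝ≥0∞) then p j ω
      else τ ω + ∑ k ∈ Finset.range (j + 1), δ k ω with hqdef
  set ρq : ℕ → Ω → ℝ≥0∞ := fun j ω => q j ω + δ (j + 1) ω with hρqdef
  set ρp : ℕ → Ω → ℝ≥0∞ := fun j ω => p j ω + δ (j + 1) ω with hρpdef
  have hFE : ∀ i t, 𝔉 t ≤ enrichedFilt G ρq i t := fun i t =>
    (hFG t).trans (le_enriched hGmono ρq i t)
  -- the trace property, by induction on the level
  have htrace : ∀ i, ∀ t, l ≤ t → ∀ A : Set Ω,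
      MeasurableSet[enrichedFilt G' ρp i t] A →
      MeasurableSet[enrichedFilt G ρq i t] (A ∩ {ω | τ ω = (l : ℝ≥0∞)}) := by
    intro i
    induction i with
    | zero =>
      exact trace_step (F' := 𝔉) (F := 𝔉)
        (fun t ht A hA => hA.inter (hDt t ht))
        (fun s hs => hDt s hs)
        (fun ω hω => by simp only [Set.mem_setOf_eq] at hω; rw [hω])
    | succ i ih =>
      exact trace_step ih
        (fun s hs => hFE i s _ (hDt s hs))
        (fun ω hω => by
          simp only [Set.mem_setOf_eq] at hω
          simp only [hρpdef, hρqdef, hqdef, if_pos hω])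
  -- ordering facts
  have hord : ∀ i, i + 1 < n - 1 → ∀ ω, ρq i ω ≤ q (i + 1) ω := by
    intro i hi ω
    by_cases hω : τ ω = (l : ℝ≥0∞)
    · simp only [hρqdef, hqdef, if_pos hω]
      exact (hpstep i hi).2 ω
    · simp only [hρqdef, hqdef, if_neg hω, Finset.sum_range_succ, ← add_assoc]
      exact le_rfl
  -- the stopping time property of q 0
  have hq0 : IsStoppingTimeE G (q 0) := by
    intro t
    rcases lt_or_ge t l with hlt | hle
    · have he : {ω | q 0 ω ≤ (t : ℝ≥0∞)} = {ω | τ ω + δ 0 ω ≤ (t : ℝ≥0∞)} := by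
        ext ω
        simp only [Set.mem_setOf_eq, hqdef, zero_add, Finset.sum_range_one]
        by_cases hω : τ ω = (l : ℝ≥0∞)
        · rw [if_pos hω, hω]
          exact iff_of_false
            (fun h => absurd (ENNReal.coe_le_coe.mp ((hl 0 (by omega) ω).trans h)) hlt.not_ge)
            (fun h => absurd (ENNReal.coe_le_coe.mp ((self_le_add_right _ _).trans h))
              hlt.not_ge)
        · rw [if_neg hω]
      rw [he]
      exact rcEnlarge_self t
    · have he : {ω | q 0 ω ≤ (t : ℝ≥0∞)} =
          ({ω | p 0 ω ≤ (t : ℝ≥0∞)} ∩ {ω | τ ω = (l : ℝ≥0∞)}) ∪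
          ({ω | τ ω + δ 0 ω ≤ (t : ℝ≥0∞)} ∩ {ω | τ ω = (l : ℝ≥0∞)}ᶜ) := by
        ext ω
        simp only [Set.mem_setOf_eq, Set.mem_union, Set.mem_inter_iff, Set.mem_compl_iff,
          hqdef, zero_add, Finset.sum_range_one]
        by_cases hω : τ ω = (l : ℝ≥0∞)
        · rw [if_pos hω]
          constructor
          · intro h; exact Or.inl ⟨h, hω⟩
          · rintro (⟨h, _⟩ | ⟨_, hc⟩)
            · exact h
            · exact absurd hω hc
        · rw [if_neg hω]
          constructor
          · intro h; exact Or.inr ⟨h, hω⟩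
          · rintro (⟨_, hc⟩ | ⟨h, _⟩)
            · exact absurd hc hω
            · exact h
      rw [he]
      exact (htrace 0 t hle _ (hp0 t)).union
        ((rcEnlarge_self t).inter ((hFG t _ (hDt t hle)).compl))
  -- the stopping time property of q (i+1)
  have hqsucc : ∀ i, i + 1 < n - 1 → IsStoppingTimeE (enrichedFilt G ρq (i + 1)) (q (i + 1)) := by
    intro i hi t
    rcases lt_or_ge t l with hlt | hle
    · have he : {ω | q (i + 1) ω ≤ (t : ℝ≥0∞)} = {ω | ρq i ω ≤ (t : ℝ≥0∞)} := by
        ext ω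
        simp only [Set.mem_setOf_eq, hqdef, hρqdef]
        by_cases hω : τ ω = (l : ℝ≥0∞)
        · rw [if_pos hω, if_pos hω]
          exact iff_of_false
            (fun h => absurd (ENNReal.coe_le_coe.mp ((hl (i + 1) hi ω).trans h)) hlt.not_ge)
            (fun h => absurd (ENNReal.coe_le_coe.mp
              ((hl i (Nat.lt_of_succ_lt hi) ω).trans ((self_le_add_right _ _).trans h)))
              hlt.not_ge)
        · rw [if_neg hω, if_neg hω, Finset.sum_range_succ, ← add_assoc]
      rw [he]
      exact rcEnlarge_self t
    · have he : {ω | q (i + 1) ω ≤ (t : ℝ≥0∞)} =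
          ({ω | p (i + 1) ω ≤ (t : ℝ≥0∞)} ∩ {ω | τ ω = (l : ℝ≥0∞)}) ∪
          ({ω | ρq i ω ≤ (t : ℝ≥0∞)} ∩ {ω | τ ω = (l : ℝ≥0∞)}ᶜ) := by
        ext ω
        simp only [Set.mem_setOf_eq, Set.mem_union, Set.mem_inter_iff, Set.mem_compl_iff,
          hqdef, hρqdef]
        by_cases hω : τ ω = (l : ℝ≥0∞)
        · rw [if_pos hω, if_pos hω]
          constructor
          · intro h; exact Or.inl ⟨h, hω⟩
          · rintro (⟨h, _⟩ | ⟨_, hc⟩)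
            · exact h
            · exact absurd hω hc
        · rw [if_neg hω, if_neg hω, Finset.sum_range_succ, ← add_assoc]
          constructor
          · intro h; exact Or.inr ⟨h, hω⟩
          · rintro (⟨_, hc⟩ | ⟨h, _⟩)
            · exact absurd hc hω
            · exact h
      rw [he]
      exact (htrace (i + 1) t hle _ ((hpstep i hi).1 t)).union
        ((rcEnlarge_self t).inter ((hFE (i + 1) t _ (hDt t hle)).compl))
  refine ⟨hq0, ?_, fun i hi => ⟨hqsucc i hi, hord i hi⟩⟩
  intro ω
  by_cases hω : τ ω = (l : ℝ≥0∞)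
  · simp only [hqdef, if_pos hω, hω]
    exact hp0le ω
  · simp only [hqdef, if_neg hω, zero_add, Finset.sum_range_one, le_refl]

end
end

section
/- Let τ be an 𝔉-stopping time, c ≥ 0, and (τ₂,…,τ_n) ∈ 𝒮^{n−1}_{τ+δ₁}(Lδ, 𝔉^{τ+δ₁}). Then (τ₂+c, …, τ_n+c) ∈ 𝒮^{n−1}_{τ+c+δ₁}(Lδ, 𝔉^{τ+c+δ₁}). -/
open MeasureTheory Set Filter
open scoped ENNReal NNReal

noncomputable section

variable {Ω : Type*}

variable {m0 : MeasurableSpace Ω}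

lemma genFilt_add_le (ρ : Ω → ℝ≥0∞) (c : ℝ≥0) {s s' : ℝ≥0} (h : s + c ≤ s') :
    genFilt ρ s ≤ genFilt (fun ω => ρ ω + c) s' := by
  apply MeasurableSpace.generateFrom_mono
  rintro A ⟨u, hu, rfl⟩
  refine ⟨u + c, le_trans (by gcongr) h, ?_⟩
  ext ω
  simp only [Set.mem_setOf_eq, ENNReal.coe_add]
  rw [ENNReal.add_le_add_iff_right ENNReal.coe_ne_top]

lemma rcEnlarge_add_le {𝔄 𝔅 : ℝ≥0 → MeasurableSpace Ω} (c : ℝ≥0)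
    (h : ∀ s, 𝔄 s ≤ 𝔅 (s + c)) (ρ : Ω → ℝ≥0∞) (t : ℝ≥0) :
    rcEnlarge 𝔄 ρ t ≤ rcEnlarge 𝔅 (fun ω => ρ ω + c) (t + c) := by
  refine le_iInf₂ fun s' hs' => ?_
  have hs' : t + c < s' := hs'
  have hcs : c ≤ s' := le_trans le_add_self hs'.le
  have hst : t < s' - c := lt_tsub_iff_right.mpr hs'
  have hadd : s' - c + c = s' := tsub_add_cancel_of_le hcs
  refine le_trans (iInf₂_le (s' - c) hst) (sup_le_sup ?_ ?_)
  · exact le_of_le_of_eq (h (s' - c)) (by rw [hadd])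
  · exact genFilt_add_le ρ c hadd.le

lemma enrichedFilt_add_le {𝔄 𝔅 : ℝ≥0 → MeasurableSpace Ω} (c : ℝ≥0)
    (h : ∀ s, 𝔄 s ≤ 𝔅 (s + c)) (ρ : ℕ → Ω → ℝ≥0∞) :
    ∀ i t, enrichedFilt 𝔄 ρ i t ≤ enrichedFilt 𝔅 (fun j ω => ρ j ω + c) i (t + c)
  | 0, t => h t
  | i + 1, t => rcEnlarge_add_le c (fun s => enrichedFilt_add_le c h ρ i s) (ρ i) t

lemma isStoppingTimeE_add_const {𝔄 𝔅 : ℝ≥0 → MeasurableSpace Ω} (c : ℝ≥0)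
    (h : ∀ s, 𝔄 s ≤ 𝔅 (s + c)) {ν : Ω → ℝ≥0∞} (hν : IsStoppingTimeE 𝔄 ν) :
    IsStoppingTimeE 𝔅 (fun ω => ν ω + c) := by
  intro t
  rcases le_or_gt c t with hct | htc
  · have ht : (t : ℝ≥0∞) = ((t - c : ℝ≥0) : ℝ≥0∞) + c := by
      rw [← ENNReal.coe_add, tsub_add_cancel_of_le hct]
    have heq : {ω | ν ω + (c : ℝ≥0∞) ≤ (t : ℝ≥0∞)}
        = {ω | ν ω ≤ ((t - c : ℝ≥0) : ℝ≥0∞)} := by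
      ext ω
      simp only [Set.mem_setOf_eq, ht,
        ENNReal.add_le_add_iff_right ENNReal.coe_ne_top]
    rw [show {ω | (fun ω => ν ω + (c : ℝ≥0∞)) ω ≤ (t : ℝ≥0∞)}
        = {ω | ν ω ≤ ((t - c : ℝ≥0) : ℝ≥0∞)} from heq]
    have hle : 𝔄 (t - c) ≤ 𝔅 t := by
      have := h (t - c); rwa [tsub_add_cancel_of_le hct] at this
    exact hle _ (hν (t - c))
  · have heq : {ω | (fun ω => ν ω + (c : ℝ≥0∞)) ω ≤ (t : ℝ≥0∞)} = ∅ := by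
      ext ω
      simp only [Set.mem_setOf_eq, Set.mem_empty_iff_false, iff_false]
      intro hle
      exact absurd (le_trans le_add_self hle) (by exact_mod_cast htc.not_ge)
    rw [heq]
    exact @MeasurableSet.empty _ (𝔅 t)

/-- If `τ` is an `𝔉`-stopping time, `c ≥ 0` and
`(τ₂,…,τ_n) ∈ 𝒮^{n-1}_{τ+δ₁}(Lδ, 𝔉^{τ+δ₁})`, then
`(τ₂+c,…,τ_n+c) ∈ 𝒮^{n-1}_{τ+c+δ₁}(Lδ, 𝔉^{τ+c+δ₁})`. -/
theorem strategy_shift_by_constant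
    (μ : Measure Ω) [IsProbabilityMeasure μ]
    (𝔉 : ℝ≥0 → MeasurableSpace Ω) (hle : ∀ t, 𝔉 t ≤ m0) (hmono : Monotone 𝔉)
    (hrc : RightContinuousFilt 𝔉)
    (hnull : ∀ A : Set Ω, μ A = 0 → MeasurableSet[𝔉 0] A)
    (n : ℕ) (hn : 2 ≤ n) (δ : ℕ → Ω → ℝ≥0∞)
    (hδfin : ∀ i, i + 1 < n → ∀ᵐ ω ∂μ, δ i ω < ∞)
    (τ : Ω → ℝ≥0∞) (hτ : IsStoppingTimeE 𝔉 τ) (c : ℝ≥0)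
    (p : ℕ → Ω → ℝ≥0∞)
    (hp : IsStrategy (rcEnlarge 𝔉 (fun ω => τ ω + δ 0 ω)) (fun i => δ (i + 1)) (n - 1)
      (fun ω => τ ω + δ 0 ω) p) :
    IsStrategy (rcEnlarge 𝔉 (fun ω => τ ω + (c : ℝ≥0∞) + δ 0 ω)) (fun i => δ (i + 1)) (n - 1)
      (fun ω => τ ω + (c : ℝ≥0∞) + δ 0 ω)
      (fun j ω => p j ω + (c : ℝ≥0∞)) := by
  obtain ⟨h0, hσ, hstep⟩ := hp
  have hσeq : (fun ω => τ ω + (c : ℝ≥0∞) + δ 0 ω) = fun ω => (τ ω + δ 0 ω) + c := by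
    funext ω; ring
  have hbase : ∀ s, rcEnlarge 𝔉 (fun ω => τ ω + δ 0 ω) s ≤
      rcEnlarge 𝔉 (fun ω => (τ ω + δ 0 ω) + c) (s + c) :=
    rcEnlarge_add_le c (fun s => hmono le_self_add) _
  have hρeq : (fun (j : ℕ) ω => (p j ω + (c : ℝ≥0∞)) + δ (j + 1) ω)
      = fun j ω => (p j ω + δ (j + 1) ω) + c := by
    funext j ω; ring
  rw [hσeq]
  refine ⟨isStoppingTimeE_add_const c hbase h0, fun ω => add_le_add_left (hσ ω) _,
    fun i hi => ⟨?_, fun ω => ?_⟩⟩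
  · show IsStoppingTimeE (enrichedFilt (rcEnlarge 𝔉 fun ω => (τ ω + δ 0 ω) + c)
        (fun j ω => (p j ω + (c : ℝ≥0∞)) + δ (j + 1) ω) (i + 1))
        (fun ω => p (i + 1) ω + c)
    rw [hρeq]
    exact isStoppingTimeE_add_const c
      (enrichedFilt_add_le c hbase (fun j ω => p j ω + δ (j + 1) ω) (i + 1))
      (hstep i hi).1
  · show (p i ω + (c : ℝ≥0∞)) + δ (i + 1) ω ≤ p (i + 1) ω + c
    rw [add_right_comm]
    exact add_le_add_left ((hstep i hi).2 ω) _

end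
end

section
/- For every 𝔉-stopping time σ: (i) Z_n^{δ,𝔉}(σ)_disc ≤ Z_n^{δ,𝔉}(σ) a.s.; (ii) if δ₁,…,δ_{n−1} are 𝔉-stopping times, then Z_n^{δ,𝔉}(σ)_disc = Z_n^{δ,𝔉}(σ) a.s. -/
open MeasureTheory Set Filter
open scoped ENNReal NNReal

noncomputable section

variable {Ω : Type*}

variable {m0 : MeasurableSpace Ω}

/-! ### Auxiliary: grid approximation -/

/-- `1/(m+1)` as an `ℝ≥0`. -/
def epsm (m : ℕ) : ℝ≥0 := ((m : ℝ≥0) + 1)⁻¹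

lemma epsm_pos (m : ℕ) : 0 < epsm m := by
  have : ((m : ℝ≥0) + 1) ≠ 0 := by positivity
  simp [epsm, pos_iff_ne_zero, this]

lemma epsm_coe (m : ℕ) : ((epsm m : ℝ≥0) : ℝ) = ((m : ℝ) + 1)⁻¹ := by
  simp [epsm]

lemma epsm_antitone : Antitone epsm := by
  intro a b hab
  have h1 : ((a : ℝ≥0) + 1) ≤ ((b : ℝ≥0) + 1) := by
    have : (a : ℝ≥0) ≤ b := by exact_mod_cast hab
    exact add_le_add_left this 1
  exact inv_anti₀ (by positivity) h1

lemma exists_epsm_lt {c : ℝ≥0} (hc : 0 < c) : ∃ m : ℕ, epsm m < c := by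
  obtain ⟨m, hm⟩ := exists_nat_one_div_lt (K := ℝ) (by exact_mod_cast hc)
  refine ⟨m, ?_⟩
  rw [← NNReal.coe_lt_coe, epsm_coe]
  simpa [one_div] using hm

lemma tendsto_epsm : Tendsto (fun m => ((epsm m : ℝ≥0) : ℝ)) atTop (nhds 0) := by
  simp only [epsm_coe]
  simpa [one_div] using tendsto_one_div_add_atTop_nhds_zero_nat (𝕜 := ℝ)
/-- round `t` up to the grid `{a/(m+1)}`. -/
def gridUp (m : ℕ) (t : ℝ≥0) : ℝ≥0 := (⌈t * ((m : ℝ≥0) + 1)⌉₊ : ℝ≥0) * epsm m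

/-- round `t` down to the grid `{a/(m+1)}`. -/
def gridDown (m : ℕ) (t : ℝ≥0) : ℝ≥0 := (⌊t * ((m : ℝ≥0) + 1)⌋₊ : ℝ≥0) * epsm m

lemma mpos (m : ℕ) : (0 : ℝ≥0) < (m : ℝ≥0) + 1 := by positivity

lemma cancel1 (m : ℕ) (a : ℝ≥0) : a * epsm m * ((m : ℝ≥0) + 1) = a := by
  rw [mul_assoc, epsm, inv_mul_cancel₀ (mpos m).ne', mul_one]

lemma cancel2 (m : ℕ) (a : ℝ≥0) : a * ((m : ℝ≥0) + 1) * epsm m = a := by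
  rw [mul_assoc, epsm, mul_inv_cancel₀ (mpos m).ne', mul_one]

lemma nnreal_mul_epsm_le_iff (m : ℕ) (a b : ℝ≥0) :
    a * epsm m ≤ b ↔ a ≤ b * ((m : ℝ≥0) + 1) := by
  constructor
  · intro h
    calc a = a * epsm m * ((m : ℝ≥0) + 1) := (cancel1 m a).symm
      _ ≤ b * ((m : ℝ≥0) + 1) := mul_le_mul_of_nonneg_right h zero_le
  · intro h
    calc a * epsm m ≤ b * ((m : ℝ≥0) + 1) * epsm m :=
          mul_le_mul_of_nonneg_right h zero_le
      _ = b := cancel2 m b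

lemma nnreal_le_mul_epsm_iff (m : ℕ) (a b : ℝ≥0) :
    a ≤ b * epsm m ↔ a * ((m : ℝ≥0) + 1) ≤ b := by
  constructor
  · intro h
    calc a * ((m : ℝ≥0) + 1) ≤ b * epsm m * ((m : ℝ≥0) + 1) :=
          mul_le_mul_of_nonneg_right h zero_le
      _ = b := cancel1 m b
  · intro h
    calc a = a * ((m : ℝ≥0) + 1) * epsm m := (cancel2 m a).symm
      _ ≤ b * epsm m := mul_le_mul_of_nonneg_right h zero_le

lemma le_gridUp (m : ℕ) (t : ℝ≥0) : t ≤ gridUp m t := by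
  rw [gridUp, nnreal_le_mul_epsm_iff]
  exact Nat.le_ceil _

lemma gridUp_le (m : ℕ) (t : ℝ≥0) : gridUp m t ≤ t + epsm m := by
  have h : (⌈t * ((m : ℝ≥0) + 1)⌉₊ : ℝ≥0) ≤ t * ((m : ℝ≥0) + 1) + 1 :=
    le_of_lt (Nat.ceil_lt_add_one zero_le)
  calc gridUp m t ≤ (t * ((m : ℝ≥0) + 1) + 1) * epsm m :=
        mul_le_mul_of_nonneg_right h zero_le
    _ = t * ((m : ℝ≥0) + 1) * epsm m + 1 * epsm m := by ring
    _ = t + epsm m := by rw [cancel2, one_mul]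

lemma gridDown_le (m : ℕ) (t : ℝ≥0) : gridDown m t ≤ t := by
  rw [gridDown, nnreal_mul_epsm_le_iff]
  exact Nat.floor_le zero_le

lemma gridUp_le_iff (m : ℕ) (y t : ℝ≥0) : gridUp m y ≤ t ↔ y ≤ gridDown m t := by
  rw [gridUp, gridDown, nnreal_mul_epsm_le_iff, nnreal_le_mul_epsm_iff]
  rw [← Nat.le_floor_iff zero_le, ← Nat.ceil_le]
/-- round an extended time up to the grid `{a/(m+1)} ∪ {∞}`. -/
def dyE (m : ℕ) (x : ℝ≥0∞) : ℝ≥0∞ :=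
  if x = ∞ then ∞ else ((gridUp m x.toNNReal : ℝ≥0) : ℝ≥0∞)

lemma le_dyE (m : ℕ) (x : ℝ≥0∞) : x ≤ dyE m x := by
  rcases eq_or_ne x ∞ with h | h
  · simp [dyE, h]
  · rw [dyE, if_neg h, ← ENNReal.coe_toNNReal h, ENNReal.coe_le_coe]
    exact le_gridUp m _

lemma dyE_le (m : ℕ) (x : ℝ≥0∞) : dyE m x ≤ x + ((epsm m : ℝ≥0) : ℝ≥0∞) := by
  rcases eq_or_ne x ∞ with h | h
  · simp [dyE, h]
  · rw [dyE, if_neg h, ← ENNReal.coe_toNNReal h, ← ENNReal.coe_add, ENNReal.coe_le_coe]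
    exact gridUp_le m _

lemma dyE_le_coe_iff (m : ℕ) (x : ℝ≥0∞) (t : ℝ≥0) :
    dyE m x ≤ (t : ℝ≥0∞) ↔ x ≤ ((gridDown m t : ℝ≥0) : ℝ≥0∞) := by
  rcases eq_or_ne x ∞ with h | h
  · simp [dyE, h]
  · rw [dyE, if_neg h]
    conv_rhs => rw [← ENNReal.coe_toNNReal h]
    rw [ENNReal.coe_le_coe, ENNReal.coe_le_coe]
    exact gridUp_le_iff m _ t

lemma dyE_range_countable (m : ℕ) (τ : Ω → ℝ≥0∞) :
    (Set.range (fun ω => dyE m (τ ω))).Countable := by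
  have hsub : Set.range (fun ω => dyE m (τ ω)) ⊆
      insert ∞ (Set.range (fun a : ℕ => (((a : ℝ≥0) * epsm m : ℝ≥0) : ℝ≥0∞))) := by
    rintro x ⟨ω, rfl⟩
    rcases eq_or_ne (τ ω) ∞ with h | h
    · simp [dyE, h]
    · right
      exact ⟨⌈(τ ω).toNNReal * ((m : ℝ≥0) + 1)⌉₊, by simp [dyE, if_neg h, gridUp]⟩
  exact ((Set.countable_range _).insert ∞).mono hsub
section Stopping

variable {𝔉 : ℝ≥0 → MeasurableSpace Ω}

lemma measurableSet_rc (hrc : RightContinuousFilt 𝔉) {t : ℝ≥0} {S : Set Ω}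
    (h : ∀ s : ℝ≥0, t < s → MeasurableSet[𝔉 s] S) : MeasurableSet[𝔉 t] S := by
  rw [hrc t]
  rw [MeasurableSpace.measurableSet_iInf]
  intro s
  rw [MeasurableSpace.measurableSet_iInf]
  intro hs
  exact h s hs

lemma stoppingE_lt (hmono : Monotone 𝔉) {ρ : Ω → ℝ≥0∞} (hρ : IsStoppingTimeE 𝔉 ρ)
    (u : ℝ≥0) : MeasurableSet[𝔉 u] {ω | ρ ω < (u : ℝ≥0∞)} := by
  have hset : {ω | ρ ω < (u : ℝ≥0∞)} =
      ⋃ k : ℕ, ⋃ (_ : u - epsm k < u), {ω | ρ ω ≤ ((u - epsm k : ℝ≥0) : ℝ≥0∞)} := by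
    ext ω
    simp only [Set.mem_setOf_eq, Set.mem_iUnion]
    constructor
    · intro h
      have hne : ρ ω ≠ ∞ := ne_top_of_lt h
      have hx : ρ ω = ((ρ ω).toNNReal : ℝ≥0∞) := (ENNReal.coe_toNNReal hne).symm
      set x := (ρ ω).toNNReal with hxdef
      have hxu : x < u := by rw [hx] at h; exact_mod_cast h
      obtain ⟨k, hk⟩ := exists_epsm_lt (tsub_pos_of_lt hxu)
      refine ⟨k, tsub_lt_self (lt_of_le_of_lt (zero_le : 0 ≤ x) hxu) (epsm_pos k), ?_⟩
      rw [hx, ENNReal.coe_le_coe]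
      have h2 : x + epsm k ≤ u := by
        calc x + epsm k ≤ x + (u - x) := add_le_add_right hk.le x
          _ = u := add_tsub_cancel_of_le hxu.le
      exact le_tsub_of_add_le_right h2
    · rintro ⟨k, hk, hle⟩
      exact lt_of_le_of_lt hle (by exact_mod_cast hk)
  rw [hset]
  exact MeasurableSet.iUnion fun k => MeasurableSet.iUnion fun hk =>
    hmono hk.le _ (hρ _)

lemma stoppingE_add (hmono : Monotone 𝔉) (hrc : RightContinuousFilt 𝔉)
    {ρ₁ ρ₂ : Ω → ℝ≥0∞} (h1 : IsStoppingTimeE 𝔉 ρ₁) (h2 : IsStoppingTimeE 𝔉 ρ₂) :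
    IsStoppingTimeE 𝔉 (fun ω => ρ₁ ω + ρ₂ ω) := by
  have hlt : ∀ u : ℝ≥0, MeasurableSet[𝔉 u] {ω | ρ₁ ω + ρ₂ ω < (u : ℝ≥0∞)} := by
    intro u
    have hset : {ω | ρ₁ ω + ρ₂ ω < (u : ℝ≥0∞)} =
        ⋃ p : ℕ × ℕ, ⋃ (_ : (p.1 : ℝ≥0) * epsm p.2 < u),
          ({ω | ρ₁ ω ≤ (((p.1 : ℝ≥0) * epsm p.2 : ℝ≥0) : ℝ≥0∞)} ∩
           {ω | ρ₂ ω < ((u - (p.1 : ℝ≥0) * epsm p.2 : ℝ≥0) : ℝ≥0∞)}) := by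
      ext ω
      simp only [Set.mem_setOf_eq, Set.mem_iUnion, Set.mem_inter_iff]
      constructor
      · intro h
        have hne1 : ρ₁ ω ≠ ∞ := by
          intro hc; rw [hc] at h; simp [top_add] at h
        have hne2 : ρ₂ ω ≠ ∞ := by
          intro hc; rw [hc] at h; simp [add_top] at h
        set x₁ := (ρ₁ ω).toNNReal with hx1def
        set x₂ := (ρ₂ ω).toNNReal with hx2def
        have hx1 : ρ₁ ω = (x₁ : ℝ≥0∞) := (ENNReal.coe_toNNReal hne1).symm
        have hx2 : ρ₂ ω = (x₂ : ℝ≥0∞) := (ENNReal.coe_toNNReal hne2).symm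
        have hsum : x₁ + x₂ < u := by
          rw [hx1, hx2, ← ENNReal.coe_add] at h; exact_mod_cast h
        obtain ⟨k, hk⟩ := exists_epsm_lt (tsub_pos_of_lt hsum)
        set q := gridUp k x₁ with hqdef
        have hq1 : x₁ ≤ q := le_gridUp k x₁
        have hq2 : q ≤ x₁ + epsm k := gridUp_le k x₁
        have hqx : q + x₂ < u := by
          calc q + x₂ ≤ x₁ + epsm k + x₂ := add_le_add_left hq2 x₂
            _ = (x₁ + x₂) + epsm k := by ring
            _ < (x₁ + x₂) + (u - (x₁ + x₂)) := add_lt_add_right hk _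
            _ = u := add_tsub_cancel_of_le hsum.le
        refine ⟨(⌈x₁ * ((k : ℝ≥0) + 1)⌉₊, k), ?_, ?_, ?_⟩
        · exact lt_of_le_of_lt (le_add_right (le_refl q)) hqx
        · rw [hx1, ENNReal.coe_le_coe]; exact hq1
        · rw [hx2, ENNReal.coe_lt_coe]
          exact lt_tsub_iff_left.mpr hqx
      · rintro ⟨p, hp, hle, hlt'⟩
        calc ρ₁ ω + ρ₂ ω ≤ (((p.1 : ℝ≥0) * epsm p.2 : ℝ≥0) : ℝ≥0∞) + ρ₂ ω :=
              add_le_add_left hle _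
          _ < (((p.1 : ℝ≥0) * epsm p.2 : ℝ≥0) : ℝ≥0∞) +
              ((u - (p.1 : ℝ≥0) * epsm p.2 : ℝ≥0) : ℝ≥0∞) :=
              ENNReal.add_lt_add_left ENNReal.coe_ne_top hlt'
          _ = (u : ℝ≥0∞) := by
              rw [← ENNReal.coe_add, add_tsub_cancel_of_le hp.le]
    rw [hset]
    exact MeasurableSet.iUnion fun p => MeasurableSet.iUnion fun hp =>
      (hmono hp.le _ (h1 _)).inter (hmono tsub_le_self _ (stoppingE_lt hmono h2 _))
  intro t
  apply measurableSet_rc hrc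
  intro s hs
  obtain ⟨k₀, hk₀⟩ := exists_epsm_lt (tsub_pos_of_lt hs)
  have hk₀' : t + epsm k₀ ≤ s := by
    calc t + epsm k₀ ≤ t + (s - t) := add_le_add_right hk₀.le t
      _ = s := add_tsub_cancel_of_le hs.le
  have hset : {ω | ρ₁ ω + ρ₂ ω ≤ (t : ℝ≥0∞)} =
      ⋂ k : ℕ, {ω | ρ₁ ω + ρ₂ ω < ((t + epsm (k + k₀) : ℝ≥0) : ℝ≥0∞)} := by
    ext ω
    simp only [Set.mem_setOf_eq, Set.mem_iInter]
    constructor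
    · intro h k
      refine lt_of_le_of_lt h ?_
      exact_mod_cast lt_add_of_pos_right t (epsm_pos (k + k₀))
    · intro h
      by_contra hc
      push_neg at hc
      have hne : ρ₁ ω + ρ₂ ω ≠ ∞ := ne_top_of_lt (h 0)
      set x := (ρ₁ ω + ρ₂ ω).toNNReal with hxdef
      have hx : ρ₁ ω + ρ₂ ω = (x : ℝ≥0∞) := (ENNReal.coe_toNNReal hne).symm
      have htx : t < x := by rw [hx] at hc; exact_mod_cast hc
      obtain ⟨j, hj⟩ := exists_epsm_lt (tsub_pos_of_lt htx)
      have hje : epsm (j + k₀) ≤ epsm j := epsm_antitone (Nat.le_add_right j k₀)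
      have : t + epsm (j + k₀) < x := by
        calc t + epsm (j + k₀) ≤ t + epsm j := add_le_add_right hje t
          _ < t + (x - t) := add_lt_add_right hj t
          _ = x := add_tsub_cancel_of_le htx.le
      have hcon := h j
      rw [hx] at hcon
      exact absurd (by exact_mod_cast hcon) (not_lt.mpr this.le)
  rw [hset]
  refine MeasurableSet.iInter fun k => ?_
  refine hmono ?_ _ (hlt (t + epsm (k + k₀)))
  calc t + epsm (k + k₀) ≤ t + epsm k₀ := add_le_add_right (epsm_antitone (Nat.le_add_left k₀ k)) t
    _ ≤ s := hk₀'

lemma stoppingE_max {ρ₁ ρ₂ : Ω → ℝ≥0∞} (h1 : IsStoppingTimeE 𝔉 ρ₁)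
    (h2 : IsStoppingTimeE 𝔉 ρ₂) :
    IsStoppingTimeE 𝔉 (fun ω => max (ρ₁ ω) (ρ₂ ω)) := by
  intro t
  have : {ω | max (ρ₁ ω) (ρ₂ ω) ≤ (t : ℝ≥0∞)} =
      {ω | ρ₁ ω ≤ (t : ℝ≥0∞)} ∩ {ω | ρ₂ ω ≤ (t : ℝ≥0∞)} := by
    ext ω; simp [max_le_iff]
  rw [this]
  exact (h1 t).inter (h2 t)

lemma stoppingE_top : IsStoppingTimeE 𝔉 (fun _ => (∞ : ℝ≥0∞)) := by
  intro t
  have : {ω : Ω | (∞ : ℝ≥0∞) ≤ (t : ℝ≥0∞)} = ∅ := by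
    ext ω; simp [ENNReal.coe_lt_top.ne']
  rw [this]
  exact @MeasurableSet.empty Ω (𝔉 t)

lemma stoppingE_dyE (hmono : Monotone 𝔉) {τ : Ω → ℝ≥0∞} (hτ : IsStoppingTimeE 𝔉 τ)
    (m : ℕ) : IsStoppingTimeE 𝔉 (fun ω => dyE m (τ ω)) := by
  intro t
  have : {ω | dyE m (τ ω) ≤ (t : ℝ≥0∞)} =
      {ω | τ ω ≤ ((gridDown m t : ℝ≥0) : ℝ≥0∞)} := by
    ext ω; simp only [Set.mem_setOf_eq]; exact dyE_le_coe_iff m (τ ω) t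
  rw [this]
  exact hmono (gridDown_le m t) _ (hτ _)

lemma measurable_of_stoppingE (hle : ∀ t, 𝔉 t ≤ m0) {ρ : Ω → ℝ≥0∞}
    (hρ : IsStoppingTimeE 𝔉 ρ) : Measurable[m0] ρ := by
  letI : MeasurableSpace Ω := m0
  apply measurable_of_Iic
  intro x
  induction x using ENNReal.recTopCoe with
  | top => simp
  | coe y =>
    have : ρ ⁻¹' Set.Iic (y : ℝ≥0∞) = {ω | ρ ω ≤ (y : ℝ≥0∞)} := rfl
    rw [this]
    exact hle y _ (hρ y)

end Stopping
section Collapse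

variable {𝔉 : ℝ≥0 → MeasurableSpace Ω}

lemma genFilt_le (hmono : Monotone 𝔉) {ρ : Ω → ℝ≥0∞} (hρ : IsStoppingTimeE 𝔉 ρ)
    (t : ℝ≥0) : genFilt ρ t ≤ 𝔉 t := by
  apply MeasurableSpace.generateFrom_le
  rintro A ⟨s, hs, rfl⟩
  exact hmono hs _ (hρ s)

lemma rcEnlarge_eq_self (hmono : Monotone 𝔉) (hrc : RightContinuousFilt 𝔉)
    {ρ : Ω → ℝ≥0∞} (hρ : IsStoppingTimeE 𝔉 ρ) : rcEnlarge 𝔉 ρ = 𝔉 := by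
  funext t
  have h : ∀ s : ℝ≥0, 𝔉 s ⊔ genFilt ρ s = 𝔉 s := fun s =>
    sup_eq_left.mpr (genFilt_le hmono hρ s)
  rw [rcEnlarge]
  simp_rw [h]
  exact (hrc t).symm

lemma enrichedFilt_collapse (hmono : Monotone 𝔉) (hrc : RightContinuousFilt 𝔉)
    (ρ : ℕ → Ω → ℝ≥0∞) :
    ∀ i : ℕ, (∀ j, j < i → IsStoppingTimeE 𝔉 (ρ j)) → enrichedFilt 𝔉 ρ i = 𝔉 := by
  intro i
  induction i with
  | zero => intro _; rfl
  | succ j ih =>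
    intro h
    have h1 : enrichedFilt 𝔉 ρ (j + 1) = rcEnlarge (enrichedFilt 𝔉 ρ j) (ρ j) := rfl
    rw [h1, ih (fun k hk => h k (hk.trans (Nat.lt_succ_self j)))]
    exact rcEnlarge_eq_self hmono hrc (h j (Nat.lt_succ_self j))

end Collapse
section Reward

lemma evalAt_nonneg {Y : ℝ≥0 → Ω → ℝ} (hYpos : ∀ t ω, 0 ≤ Y t ω) (τ : Ω → ℝ≥0∞)
    (ω : Ω) : 0 ≤ evalAt Y τ ω := by
  rw [evalAt]
  split_ifs with h
  · exact hYpos _ ω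
  · rw [Filter.limsup_eq]
    apply Real.sInf_nonneg
    intro a ha
    rw [Set.mem_setOf_eq] at ha
    obtain ⟨t, ht⟩ := ha.exists
    exact le_trans (hYpos t ω) ht

lemma rewardSum_nonneg {Y : ℝ≥0 → Ω → ℝ} (hYpos : ∀ t ω, 0 ≤ Y t ω) (n : ℕ)
    (τ : ℕ → Ω → ℝ≥0∞) (ω : Ω) : 0 ≤ rewardSum Y n τ ω :=
  Finset.sum_nonneg fun i _ => evalAt_nonneg hYpos (τ i) ω

lemma isStrategy_top (𝔉 : ℝ≥0 → MeasurableSpace Ω) (δ : ℕ → Ω → ℝ≥0∞) (n : ℕ)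
    (σ : Ω → ℝ≥0∞) : IsStrategy 𝔉 δ n σ (fun _ _ => (∞ : ℝ≥0∞)) := by
  refine ⟨stoppingE_top, fun ω => le_top, fun i hi => ⟨?_, fun ω => le_top⟩⟩
  exact stoppingE_top

end Reward
section Yreg

lemma tendsto_Y_right {Y : ℝ≥0 → Ω → ℝ}
    (hYrc : ∀ ω t, ContinuousWithinAt (fun s => Y s ω) (Set.Ici t) t)
    (ω : Ω) {t : ℝ≥0} {s : ℕ → ℝ≥0} (h1 : ∀ m, t ≤ s m) (h2 : ∀ m, s m ≤ t + epsm m) :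
    Tendsto (fun m => Y (s m) ω) atTop (nhds (Y t ω)) := by
  have hs : Tendsto s atTop (nhds t) := by
    rw [tendsto_iff_dist_tendsto_zero]
    apply squeeze_zero (fun m => dist_nonneg) ?_ tendsto_epsm
    intro m
    have h0 : (t : ℝ) ≤ (s m : ℝ) := by exact_mod_cast h1 m
    rw [NNReal.dist_eq, abs_of_nonneg (by linarith)]
    have h3 : (s m : ℝ) ≤ (t : ℝ) + (epsm m : ℝ) := by exact_mod_cast h2 m
    linarith
  have hsIci : Tendsto s atTop (nhdsWithin t (Set.Ici t)) :=
    tendsto_nhdsWithin_of_tendsto_nhds_of_eventually_within s hs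
      (Filter.Eventually.of_forall h1)
  exact (hYrc ω t).tendsto.comp hsIci

end Yreg

section Ymeas

variable {X : Type*} [mX : MeasurableSpace X] {Y : ℝ≥0 → X → ℝ}

lemma measurable_ceil_mul (m : ℕ) :
    Measurable fun t : ℝ≥0 => ⌈t * ((m : ℝ≥0) + 1)⌉₊ := by
  apply measurable_to_countable'
  intro j
  match j with
  | 0 =>
    have : (fun t : ℝ≥0 => ⌈t * ((m : ℝ≥0) + 1)⌉₊) ⁻¹' {0} =
        {t : ℝ≥0 | t * ((m : ℝ≥0) + 1) ≤ 0} := by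
      ext t; simp [Nat.ceil_eq_zero]
    rw [this]
    exact measurableSet_le (measurable_id.mul_const _) measurable_const
  | (k + 1) =>
    have : (fun t : ℝ≥0 => ⌈t * ((m : ℝ≥0) + 1)⌉₊) ⁻¹' {k + 1} =
        {t : ℝ≥0 | (k : ℝ≥0) < t * ((m : ℝ≥0) + 1)} ∩
        {t : ℝ≥0 | t * ((m : ℝ≥0) + 1) ≤ ((k : ℝ≥0) + 1)} := by
      ext t
      simp only [Set.mem_preimage, Set.mem_singleton_iff, Set.mem_inter_iff,
        Set.mem_setOf_eq, Nat.ceil_eq_iff (Nat.succ_ne_zero k)]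
      push_cast
      simp
    rw [this]
    exact (measurableSet_lt measurable_const (measurable_id.mul_const _)).inter
      (measurableSet_le (measurable_id.mul_const _) measurable_const)

lemma measurable_Y_joint (hadapt : ∀ t, Measurable (Y t))
    (hYrc : ∀ ω t, ContinuousWithinAt (fun s => Y s ω) (Set.Ici t) t) :
    Measurable fun p : ℝ≥0 × X => Y p.1 p.2 := by
  have hstep : ∀ m : ℕ, Measurable fun p : ℝ≥0 × X => Y (gridUp m p.1) p.2 := by
    intro m B hB
    have heq : (fun p : ℝ≥0 × X => Y (gridUp m p.1) p.2) ⁻¹' B =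
        ⋃ j : ℕ, (((fun t : ℝ≥0 => ⌈t * ((m : ℝ≥0) + 1)⌉₊) ⁻¹' {j}) ×ˢ
          (Y ((j : ℝ≥0) * epsm m) ⁻¹' B)) := by
      ext p
      simp only [Set.mem_preimage, Set.mem_iUnion, Set.mem_prod, Set.mem_singleton_iff]
      constructor
      · intro h
        exact ⟨⌈p.1 * ((m : ℝ≥0) + 1)⌉₊, rfl, h⟩
      · rintro ⟨j, hj, hmem⟩
        have hg : gridUp m p.1 = (j : ℝ≥0) * epsm m := by rw [gridUp, hj]
        rw [hg]
        exact hmem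
    rw [heq]
    exact MeasurableSet.iUnion fun j =>
      (measurable_ceil_mul m (measurableSet_singleton j)).prod (hadapt _ hB)
  apply measurable_of_tendsto_metrizable hstep
  rw [tendsto_pi_nhds]
  intro p
  exact tendsto_Y_right hYrc p.2 (fun m => le_gridUp m p.1) (fun m => gridUp_le m p.1)

/-- A measurable version of `ω ↦ sup_t (Y t ω)₊` (sup over a countable dense grid). -/
def supY (Y : ℝ≥0 → X → ℝ) (ω : X) : ℝ≥0∞ :=
  ⨆ p : ℕ × ℕ, ENNReal.ofReal (Y ((p.1 : ℝ≥0) * epsm p.2) ω)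

lemma measurable_supY (hadapt : ∀ t, Measurable (Y t)) : Measurable (supY Y) :=
  Measurable.iSup fun _ => ENNReal.measurable_ofReal.comp (hadapt _)

lemma supY_le (ω : X) : supY Y ω ≤ ⨆ t : ℝ≥0, ENNReal.ofReal (Y t ω) :=
  iSup_le fun _ => le_iSup (fun t : ℝ≥0 => ENNReal.ofReal (Y t ω)) _

lemma le_supY_toReal (hYpos : ∀ t ω, 0 ≤ Y t ω)
    (hYrc : ∀ ω t, ContinuousWithinAt (fun s => Y s ω) (Set.Ici t) t)
    (t : ℝ≥0) (ω : X) (h : supY Y ω ≠ ∞) : Y t ω ≤ (supY Y ω).toReal := by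
  have key : ∀ m : ℕ, Y (gridUp m t) ω ≤ (supY Y ω).toReal := by
    intro m
    have h1 : ENNReal.ofReal (Y (gridUp m t) ω) ≤ supY Y ω := by
      simpa [gridUp, supY] using
        le_iSup (fun p : ℕ × ℕ => ENNReal.ofReal (Y ((p.1 : ℝ≥0) * epsm p.2) ω))
          (⌈t * ((m : ℝ≥0) + 1)⌉₊, m)
    calc Y (gridUp m t) ω = (ENNReal.ofReal (Y (gridUp m t) ω)).toReal :=
          (ENNReal.toReal_ofReal (hYpos _ ω)).symm
      _ ≤ (supY Y ω).toReal := ENNReal.toReal_mono h h1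
  exact le_of_tendsto
    (tendsto_Y_right hYrc ω (fun m => le_gridUp m t) (fun m => gridUp_le m t))
    (Filter.Eventually.of_forall key)

end Ymeas
section Approx

variable {𝔉 : ℝ≥0 → MeasurableSpace Ω}

/-- The discretized strategy: round the first time up to the grid, then push the later
times minimally to restore admissibility. -/
def tauApprox (m : ℕ) (τ δ : ℕ → Ω → ℝ≥0∞) : ℕ → Ω → ℝ≥0∞
  | 0 => fun ω => dyE m (τ 0 ω)
  | i + 1 => fun ω => max (τ (i + 1) ω) (tauApprox m τ δ i ω + δ i ω)

lemma tauApprox_zero (m : ℕ) (τ δ : ℕ → Ω → ℝ≥0∞) :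
    tauApprox m τ δ 0 = fun ω => dyE m (τ 0 ω) := rfl

lemma tauApprox_succ (m : ℕ) (τ δ : ℕ → Ω → ℝ≥0∞) (i : ℕ) :
    tauApprox m τ δ (i + 1) =
      fun ω => max (τ (i + 1) ω) (tauApprox m τ δ i ω + δ i ω) := rfl

lemma tauApprox_ge (m : ℕ) (τ δ : ℕ → Ω → ℝ≥0∞) :
    ∀ i ω, τ i ω ≤ tauApprox m τ δ i ω
  | 0, ω => le_dyE m _
  | i + 1, ω => le_max_left _ _

lemma tauApprox_le {n : ℕ} {τ δ : ℕ → Ω → ℝ≥0∞}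
    (horder : ∀ i, i + 1 < n → ∀ ω, τ i ω + δ i ω ≤ τ (i + 1) ω) (m : ℕ) :
    ∀ i, i < n → ∀ ω, tauApprox m τ δ i ω ≤ τ i ω + ((epsm m : ℝ≥0) : ℝ≥0∞) := by
  intro i
  induction i with
  | zero => intro _ ω; exact dyE_le m _
  | succ j ih =>
    intro hj ω
    rw [tauApprox_succ]
    apply max_le le_self_add
    calc tauApprox m τ δ j ω + δ j ω
        ≤ (τ j ω + ((epsm m : ℝ≥0) : ℝ≥0∞)) + δ j ω :=
          add_le_add_left (ih (Nat.lt_of_succ_lt hj) ω) _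
      _ = (τ j ω + δ j ω) + ((epsm m : ℝ≥0) : ℝ≥0∞) := by ring
      _ ≤ τ (j + 1) ω + ((epsm m : ℝ≥0) : ℝ≥0∞) := add_le_add_left (horder j hj ω) _

lemma tau_stopping_of_strategy (hmono : Monotone 𝔉) (hrc : RightContinuousFilt 𝔉)
    {δ : ℕ → Ω → ℝ≥0∞} {n : ℕ} {σ : Ω → ℝ≥0∞} {τ : ℕ → Ω → ℝ≥0∞}
    (hstrat : IsStrategy 𝔉 δ n σ τ)
    (hδ : ∀ i, i + 1 < n → IsStoppingTimeE 𝔉 (δ i)) :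
    ∀ i, i < n → IsStoppingTimeE 𝔉 (τ i) := by
  intro i
  induction i using Nat.strong_induction_on with
  | _ i IH =>
    match i with
    | 0 => intro _; exact hstrat.1
    | j + 1 =>
      intro hj
      have hcol : enrichedFilt 𝔉 (fun k ω => τ k ω + δ k ω) (j + 1) = 𝔉 := by
        apply enrichedFilt_collapse hmono hrc
        intro k hk
        exact stoppingE_add hmono hrc
          (IH k hk (lt_of_lt_of_le hk (le_of_lt hj)))
          (hδ k (lt_of_le_of_lt (Nat.succ_le_succ (Nat.le_of_lt_succ hk)) hj))
      have h := (hstrat.2.2 j hj).1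
      rw [hcol] at h
      exact h

lemma tauApprox_stopping (hmono : Monotone 𝔉) (hrc : RightContinuousFilt 𝔉)
    {δ : ℕ → Ω → ℝ≥0∞} {n : ℕ} {σ : Ω → ℝ≥0∞} {τ : ℕ → Ω → ℝ≥0∞}
    (hstrat : IsStrategy 𝔉 δ n σ τ)
    (hδ : ∀ i, i + 1 < n → IsStoppingTimeE 𝔉 (δ i)) (m : ℕ) :
    ∀ i, i < n → IsStoppingTimeE 𝔉 (tauApprox m τ δ i) := by
  intro i
  induction i with
  | zero =>
    intro _
    rw [tauApprox_zero]
    exact stoppingE_dyE hmono hstrat.1 m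
  | succ j ih =>
    intro hj
    rw [tauApprox_succ]
    exact stoppingE_max (tau_stopping_of_strategy hmono hrc hstrat hδ (j + 1) hj)
      (stoppingE_add hmono hrc (ih (Nat.lt_of_succ_lt hj)) (hδ j hj))

lemma isStrategy_tauApprox (hmono : Monotone 𝔉) (hrc : RightContinuousFilt 𝔉)
    {δ : ℕ → Ω → ℝ≥0∞} {n : ℕ} {σ : Ω → ℝ≥0∞} {τ : ℕ → Ω → ℝ≥0∞}
    (hstrat : IsStrategy 𝔉 δ n σ τ)
    (hδ : ∀ i, i + 1 < n → IsStoppingTimeE 𝔉 (δ i)) (m : ℕ) :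
    IsStrategy 𝔉 δ n σ (tauApprox m τ δ) := by
  refine ⟨?_, fun ω => (hstrat.2.1 ω).trans (le_dyE m _), fun i hi => ⟨?_, fun ω => ?_⟩⟩
  · rw [tauApprox_zero]
    exact stoppingE_dyE hmono hstrat.1 m
  · have hcol : enrichedFilt 𝔉 (fun k ω => tauApprox m τ δ k ω + δ k ω) (i + 1) = 𝔉 := by
      apply enrichedFilt_collapse hmono hrc
      intro k hk
      exact stoppingE_add hmono hrc
        (tauApprox_stopping hmono hrc hstrat hδ m k (lt_of_lt_of_le hk (le_of_lt hi)))
        (hδ k (lt_of_le_of_lt (Nat.succ_le_succ (Nat.le_of_lt_succ hk)) hi))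
    rw [hcol]
    exact tauApprox_stopping hmono hrc hstrat hδ m (i + 1) hi
  · rw [tauApprox_succ]
    exact le_max_right _ _

end Approx
section Ddiff

/-- The increment `Y(τ'') - Y(τ)` on `{τ ≠ ∞}` (the `limsup` branch cancels). -/
def Ddiff (Y : ℝ≥0 → Ω → ℝ) (τ τ' : Ω → ℝ≥0∞) (ω : Ω) : ℝ :=
  if τ ω ≠ ∞ then Y ((τ' ω).toNNReal) ω - Y ((τ ω).toNNReal) ω else 0

lemma evalAt_eq_add {Y : ℝ≥0 → Ω → ℝ} {τ τ' : Ω → ℝ≥0∞} {ω : Ω} (h2 : τ ω ≤ τ' ω)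
    {c : ℝ≥0} (h3 : τ' ω ≤ τ ω + (c : ℝ≥0∞)) :
    evalAt Y τ' ω = evalAt Y τ ω + Ddiff Y τ τ' ω := by
  by_cases h : τ ω = ∞
  · have h' : τ' ω = ∞ := top_le_iff.mp (h ▸ h2)
    simp [evalAt, Ddiff, h, h']
  · have h' : τ' ω ≠ ∞ := by
      intro hc
      rw [hc, top_le_iff] at h3
      rcases ENNReal.add_eq_top.mp h3 with h4 | h4
      · exact h h4
      · exact ENNReal.coe_ne_top h4
    simp only [evalAt, Ddiff, h, h', ne_eq, not_false_eq_true, if_true]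
    ring

lemma tendsto_Ddiff {Y : ℝ≥0 → Ω → ℝ}
    (hYrc : ∀ ω t, ContinuousWithinAt (fun s => Y s ω) (Set.Ici t) t)
    {τ : Ω → ℝ≥0∞} {τ' : ℕ → Ω → ℝ≥0∞} (ω : Ω)
    (hge : ∀ m, τ ω ≤ τ' m ω)
    (hle2 : ∀ m, τ' m ω ≤ τ ω + ((epsm m : ℝ≥0) : ℝ≥0∞)) :
    Tendsto (fun m => Ddiff Y τ (τ' m) ω) atTop (nhds 0) := by
  by_cases h : τ ω = ∞
  · simp only [Ddiff, h, ne_eq, not_true_eq_false, if_false]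
    exact tendsto_const_nhds
  · set x := (τ ω).toNNReal with hxdef
    have hx : τ ω = (x : ℝ≥0∞) := (ENNReal.coe_toNNReal h).symm
    have hfin : ∀ m, τ' m ω ≠ ∞ := by
      intro m hc
      have h5 := hle2 m
      rw [hc, top_le_iff, hx, ← ENNReal.coe_add] at h5
      exact ENNReal.coe_ne_top h5
    have hsm1 : ∀ m, x ≤ (τ' m ω).toNNReal := by
      intro m
      have := hge m
      rw [hx, ← ENNReal.coe_toNNReal (hfin m), ENNReal.coe_le_coe] at this
      exact this
    have hsm2 : ∀ m, (τ' m ω).toNNReal ≤ x + epsm m := by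
      intro m
      have h5 := hle2 m
      rw [hx, ← ENNReal.coe_add] at h5
      rw [← ENNReal.coe_toNNReal (hfin m), ENNReal.coe_le_coe] at h5
      exact h5
    have heq : (fun m => Ddiff Y τ (τ' m) ω) =
        fun m => Y ((τ' m ω).toNNReal) ω - Y x ω := by
      funext m
      simp [Ddiff, h, hxdef]
    rw [heq]
    have := (tendsto_Y_right hYrc ω hsm1 hsm2).sub
      (tendsto_const_nhds (x := Y x ω) (f := atTop (α := ℕ)))
    simpa using this

end Ddiff

section DdiffMeas

variable {X : Type*} [mX : MeasurableSpace X] {Y : ℝ≥0 → X → ℝ}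

lemma measurable_Ddiff (hYj : Measurable fun p : ℝ≥0 × X => Y p.1 p.2)
    {τ τ' : X → ℝ≥0∞} (hτ : Measurable τ) (hτ' : Measurable τ') :
    Measurable (Ddiff Y τ τ') := by
  have hset : MeasurableSet {ω | τ ω ≠ ∞} := (hτ (measurableSet_singleton ∞)).compl
  exact Measurable.ite hset
    ((hYj.comp ((ENNReal.measurable_toNNReal.comp hτ').prodMk measurable_id)).sub
      (hYj.comp ((ENNReal.measurable_toNNReal.comp hτ).prodMk measurable_id)))
    measurable_const

lemma abs_Ddiff_le (hYpos : ∀ t ω, 0 ≤ Y t ω)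
    (hYrc : ∀ ω t, ContinuousWithinAt (fun s => Y s ω) (Set.Ici t) t)
    {τ τ' : X → ℝ≥0∞} (ω : X) (h : supY Y ω ≠ ∞) :
    |Ddiff Y τ τ' ω| ≤ 2 * (supY Y ω).toReal := by
  rw [Ddiff]
  split_ifs with hh
  · calc |Y ((τ' ω).toNNReal) ω - Y ((τ ω).toNNReal) ω|
        ≤ |Y ((τ' ω).toNNReal) ω| + |Y ((τ ω).toNNReal) ω| := abs_sub _ _
      _ = Y ((τ' ω).toNNReal) ω + Y ((τ ω).toNNReal) ω := by
          rw [abs_of_nonneg (hYpos _ ω), abs_of_nonneg (hYpos _ ω)]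
      _ ≤ (supY Y ω).toReal + (supY Y ω).toReal :=
          add_le_add (le_supY_toReal hYpos hYrc _ ω h) (le_supY_toReal hYpos hYrc _ ω h)
      _ = 2 * (supY Y ω).toReal := by ring
  · simp only [abs_zero]
    positivity

end DdiffMeas
/-- `Z_n^{δ,𝔉}(σ)_disc ≤ Z_n^{δ,𝔉}(σ)` a.s., with equality if the
waiting times `δ₁,…,δ_{n-1}` are `𝔉`-stopping times. -/
theorem Z_disc_le_Z_and_eq_of_stopping
    (μ : Measure Ω) [IsProbabilityMeasure μ]
    (𝔉 : ℝ≥0 → MeasurableSpace Ω) (hle : ∀ t, 𝔉 t ≤ m0) (hmono : Monotone 𝔉)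
    (hrc : RightContinuousFilt 𝔉)
    (hnull : ∀ A : Set Ω, μ A = 0 → MeasurableSet[𝔉 0] A)
    (Y : ℝ≥0 → Ω → ℝ) (hadapt : ∀ t, Measurable[𝔉 t] (Y t))
    (hYpos : ∀ t ω, 0 ≤ Y t ω)
    (hYrc : ∀ ω t, ContinuousWithinAt (fun s => Y s ω) (Set.Ici t) t)
    (hYint : ∫⁻ ω, ⨆ t : ℝ≥0, ENNReal.ofReal (Y t ω) ∂μ < ∞)
    (n : ℕ) (hn : 2 ≤ n) (δ : ℕ → Ω → ℝ≥0∞)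
    (hδfin : ∀ i, i + 1 < n → ∀ᵐ ω ∂μ, δ i ω < ∞)
    (σ : Ω → ℝ≥0∞) (hσ : IsStoppingTimeE 𝔉 σ)
    (Z Zd : Ω → ℝ)
    (hZ : IsEssSupFam μ (gainFam μ Y 𝔉 δ n σ) Z)
    (hZd : IsEssSupFam μ (gainFamDisc μ Y 𝔉 δ n σ) Zd) :
    Zd ≤ᵐ[μ] Z ∧
      ((∀ i, i + 1 < n → IsStoppingTimeE 𝔉 (δ i)) → Zd =ᵐ[μ] Z) := by
  have hZdZ : Zd ≤ᵐ[μ] Z := by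
    apply hZd.2
    rintro f ⟨τ, hτ, hcnt, rfl⟩
    exact hZ.1 _ ⟨τ, hτ, rfl⟩
  refine ⟨hZdZ, fun hδ => ?_⟩
  apply hZdZ.antisymm
  apply hZ.2
  rintro g ⟨τ, hstrat, rfl⟩
  set G := sigmaAt 𝔉 σ with hGdef
  letI : MeasurableSpace Ω := m0
  -- `Zd` dominates the conditional gain of the trivial strategy, hence is a.e. nonnegative
  have hZd0 : (0 : Ω → ℝ) ≤ᵐ[μ] Zd := by
    have hcnt : (Set.range (fun _ : Ω => (∞ : ℝ≥0∞))).Countable := by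
      apply (Set.countable_singleton (∞ : ℝ≥0∞)).mono
      rintro x ⟨ω, rfl⟩
      simp
    have h1 : μ[rewardSum Y n (fun _ _ => (∞ : ℝ≥0∞))|G] ≤ᵐ[μ] Zd :=
      hZd.1 _ ⟨fun _ _ => ∞, isStrategy_top 𝔉 δ n σ, hcnt, rfl⟩
    have h2 : (0 : Ω → ℝ) ≤ᵐ[μ] μ[rewardSum Y n (fun _ _ => (∞ : ℝ≥0∞))|G] :=
      condExp_nonneg (Filter.Eventually.of_forall (rewardSum_nonneg hYpos n _))
    exact h2.trans h1
  by_cases hG : G ≤ m0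
  swap
  · rw [condExp_of_not_le hG]
    exact hZd0
  by_cases hR : Integrable (rewardSum Y n τ) μ
  swap
  · rw [condExp_of_not_integrable hR]
    exact hZd0
  -- main case
  have hτstop : ∀ i, i < n → IsStoppingTimeE 𝔉 (τ i) :=
    tau_stopping_of_strategy hmono hrc hstrat hδ
  have hτmeas : ∀ i, i < n → Measurable (τ i) :=
    fun i hi => measurable_of_stoppingE hle (hτstop i hi)
  have hτmstop : ∀ m i, i < n → IsStoppingTimeE 𝔉 (tauApprox m τ δ i) :=
    fun m => tauApprox_stopping hmono hrc hstrat hδ m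
  have hτmmeas : ∀ m i, i < n → Measurable (tauApprox m τ δ i) :=
    fun m i hi => measurable_of_stoppingE hle (hτmstop m i hi)
  have horder : ∀ i, i + 1 < n → ∀ ω, τ i ω + δ i ω ≤ τ (i + 1) ω :=
    fun i hi => (hstrat.2.2 i hi).2
  have hge : ∀ m i ω, τ i ω ≤ tauApprox m τ δ i ω := fun m => tauApprox_ge m τ δ
  have happle : ∀ m i, i < n → ∀ ω,
      tauApprox m τ δ i ω ≤ τ i ω + ((epsm m : ℝ≥0) : ℝ≥0∞) :=
    fun m => tauApprox_le horder m
  have hYm : ∀ t, Measurable (Y t) := fun t => (hadapt t).mono (hle t) le_rfl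
  have hYj : Measurable fun p : ℝ≥0 × Ω => Y p.1 p.2 := measurable_Y_joint hYm hYrc
  -- pointwise decomposition of the approximated reward
  have hptwise : ∀ m ω, rewardSum Y n (tauApprox m τ δ) ω =
      rewardSum Y n τ ω + ∑ i ∈ Finset.range n, Ddiff Y (τ i) (tauApprox m τ δ i) ω := by
    intro m ω
    rw [rewardSum, rewardSum, ← Finset.sum_add_distrib]
    refine Finset.sum_congr rfl fun i hi => ?_
    exact evalAt_eq_add (hge m i ω) (happle m i (Finset.mem_range.mp hi) ω)
  set Dm : ℕ → Ω → ℝ :=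
    fun m ω => ∑ i ∈ Finset.range n, Ddiff Y (τ i) (tauApprox m τ δ i) ω with hDmdef
  have hDmmeas : ∀ m, Measurable (Dm m) := by
    intro m
    apply Finset.measurable_sum
    intro i hi
    exact measurable_Ddiff hYj (hτmeas i (Finset.mem_range.mp hi))
      (hτmmeas m i (Finset.mem_range.mp hi))
  -- dominating function
  have hWmeas : Measurable (supY Y) := measurable_supY hYm
  have hWint : ∫⁻ ω, supY Y ω ∂μ < ∞ :=
    lt_of_le_of_lt (lintegral_mono fun ω => supY_le ω) hYint
  have hWfin : ∀ᵐ ω ∂μ, supY Y ω ≠ ∞ := by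
    filter_upwards [ae_lt_top hWmeas hWint.ne] with ω h using h.ne
  set bound : Ω → ℝ := fun ω => (n : ℝ) * (2 * (supY Y ω).toReal) with hbounddef
  have hboundmeas : Measurable bound := (hWmeas.ennreal_toReal.const_mul 2).const_mul _
  have hboundint : Integrable bound μ := by
    refine ⟨hboundmeas.aestronglyMeasurable, ?_⟩
    have hb : ∀ ω, ENNReal.ofReal (bound ω) ≤ ENNReal.ofReal ((n : ℝ) * 2) * supY Y ω := by
      intro ω
      rw [show bound ω = ((n : ℝ) * 2) * (supY Y ω).toReal by rw [hbounddef]; ring,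
        ENNReal.ofReal_mul (by positivity)]
      exact mul_le_mul_right ENNReal.ofReal_toReal_le _
    rw [hasFiniteIntegral_iff_ofReal (Filter.Eventually.of_forall fun ω => by positivity)]
    calc ∫⁻ ω, ENNReal.ofReal (bound ω) ∂μ
        ≤ ∫⁻ ω, ENNReal.ofReal ((n : ℝ) * 2) * supY Y ω ∂μ := lintegral_mono hb
      _ = ENNReal.ofReal ((n : ℝ) * 2) * ∫⁻ ω, supY Y ω ∂μ := lintegral_const_mul _ hWmeas
      _ < ∞ := ENNReal.mul_lt_top ENNReal.ofReal_lt_top hWint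
  -- the increments are dominated and tend to `0`
  have hDmbound : ∀ᵐ ω ∂μ, ∀ m, |Dm m ω| ≤ bound ω := by
    filter_upwards [hWfin] with ω hW m
    calc |Dm m ω| ≤ ∑ i ∈ Finset.range n, |Ddiff Y (τ i) (tauApprox m τ δ i) ω| :=
          Finset.abs_sum_le_sum_abs _ _
      _ ≤ ∑ _i ∈ Finset.range n, 2 * (supY Y ω).toReal :=
          Finset.sum_le_sum fun i _ => abs_Ddiff_le hYpos hYrc ω hW
      _ = bound ω := by
          rw [Finset.sum_const, Finset.card_range, nsmul_eq_mul, hbounddef]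
  have hDmtend : ∀ ω, Tendsto (fun m => Dm m ω) atTop (nhds 0) := by
    intro ω
    have h0 : (0 : ℝ) = ∑ _i ∈ Finset.range n, (0 : ℝ) := by simp
    rw [h0]
    apply tendsto_finset_sum
    intro i hi
    exact tendsto_Ddiff hYrc ω (fun m => hge m i ω)
      (fun m => happle m i (Finset.mem_range.mp hi) ω)
  have hDmint : ∀ m, Integrable (Dm m) μ := by
    intro m
    refine Integrable.mono' hboundint (hDmmeas m).aestronglyMeasurable ?_
    filter_upwards [hDmbound] with ω h
    rw [Real.norm_eq_abs]
    exact h m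
  have hRmint : ∀ m, Integrable (rewardSum Y n (tauApprox m τ δ)) μ := by
    intro m
    have heq : rewardSum Y n (tauApprox m τ δ) = fun ω => rewardSum Y n τ ω + Dm m ω :=
      funext fun ω => hptwise m ω
    rw [heq]
    exact hR.add (hDmint m)
  -- discretized conditional gains are dominated by `Zd`
  have hmem : ∀ m, μ[rewardSum Y n (tauApprox m τ δ)|G] ≤ᵐ[μ] Zd := by
    intro m
    apply hZd.1
    refine ⟨tauApprox m τ δ, isStrategy_tauApprox hmono hrc hstrat hδ m, ?_, rfl⟩
    rw [tauApprox_zero]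
    exact dyE_range_countable m (τ 0)
  -- `L¹` convergence of the conditional expectations
  have hAle : ∀ m, ∫ ω, |(μ[rewardSum Y n τ|G]) ω - (μ[rewardSum Y n (tauApprox m τ δ)|G]) ω| ∂μ
      ≤ ∫ ω, |Dm m ω| ∂μ := by
    intro m
    have h2 : (fun ω => |(μ[rewardSum Y n τ|G]) ω - (μ[rewardSum Y n (tauApprox m τ δ)|G]) ω|)
        =ᵐ[μ] fun ω => |(μ[rewardSum Y n τ - rewardSum Y n (tauApprox m τ δ)|G]) ω| := by
      filter_upwards [condExp_sub (m := G) hR (hRmint m)] with ω h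
      simp only [Pi.sub_apply] at h
      rw [h]
    rw [integral_congr_ae h2]
    refine (integral_abs_condExp_le _).trans_eq ?_
    refine integral_congr_ae (Filter.Eventually.of_forall fun ω => ?_)
    show |(rewardSum Y n τ - rewardSum Y n (tauApprox m τ δ)) ω| = |Dm m ω|
    rw [Pi.sub_apply, hptwise m ω]
    have h3 : rewardSum Y n τ ω - (rewardSum Y n τ ω + Dm m ω) = -(Dm m ω) := by ring
    rw [h3, abs_neg]
  have hDCT : Tendsto (fun m => ∫ ω, |Dm m ω| ∂μ) atTop (nhds 0) := by
    have h := tendsto_integral_of_dominated_convergence (μ := μ)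
      (F := fun m ω => |Dm m ω|) (f := fun _ => (0 : ℝ)) bound
      (fun m => ((hDmmeas m).abs).aestronglyMeasurable)
      hboundint
      (fun m => by
        filter_upwards [hDmbound] with ω hb
        rw [Real.norm_eq_abs, abs_abs]
        exact hb m)
      (Filter.Eventually.of_forall fun ω => by simpa using (hDmtend ω).abs)
    simpa using h
  have hAtend : Tendsto
      (fun m => ∫ ω, |(μ[rewardSum Y n τ|G]) ω - (μ[rewardSum Y n (tauApprox m τ δ)|G]) ω| ∂μ)
      atTop (nhds 0) :=
    squeeze_zero (fun m => integral_nonneg fun ω => abs_nonneg _) hAle hDCT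
  -- pass to an a.e. statement via Fatou
  set φ : ℕ → Ω → ℝ≥0∞ := fun m ω =>
    ENNReal.ofReal |(μ[rewardSum Y n τ|G]) ω - (μ[rewardSum Y n (tauApprox m τ δ)|G]) ω|
    with hφdef
  have hfmeas : Measurable (μ[rewardSum Y n τ|G]) :=
    (stronglyMeasurable_condExp.mono hG).measurable
  have hfmmeas : ∀ m, Measurable (μ[rewardSum Y n (tauApprox m τ δ)|G]) :=
    fun _ => (stronglyMeasurable_condExp.mono hG).measurable
  have hφmeas : ∀ m, Measurable (φ m) := fun m =>
    ENNReal.measurable_ofReal.comp ((hfmeas.sub (hfmmeas m)).abs)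
  have hφint : ∀ m, ∫⁻ ω, φ m ω ∂μ =
      ENNReal.ofReal (∫ ω, |(μ[rewardSum Y n τ|G]) ω - (μ[rewardSum Y n (tauApprox m τ δ)|G]) ω| ∂μ) := by
    intro m
    rw [← ofReal_integral_eq_lintegral_ofReal]
    · exact (integrable_condExp.sub integrable_condExp).abs
    · exact Filter.Eventually.of_forall fun ω => abs_nonneg _
  have hφtend : Tendsto (fun m => ∫⁻ ω, φ m ω ∂μ) atTop (nhds 0) := by
    simp_rw [hφint]
    have h := (ENNReal.continuous_ofReal.tendsto 0).comp hAtend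
    simpa [Function.comp_def] using h
  have hliminf : ∀ᵐ ω ∂μ, liminf (fun m => φ m ω) atTop = 0 := by
    have hle0 : ∫⁻ ω, liminf (fun m => φ m ω) atTop ∂μ = 0 := by
      apply le_antisymm _ zero_le
      calc ∫⁻ ω, liminf (fun m => φ m ω) atTop ∂μ
          ≤ liminf (fun m => ∫⁻ ω, φ m ω ∂μ) atTop := lintegral_liminf_le hφmeas
        _ = 0 := hφtend.liminf_eq
    have hmeasl : Measurable fun ω => liminf (fun m => φ m ω) atTop :=
      Measurable.liminf hφmeas
    exact (lintegral_eq_zero_iff hmeasl).mp hle0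
  -- conclude
  filter_upwards [hliminf, ae_all_iff.mpr hmem] with ω h0 hm
  have hkey : ∀ m, ENNReal.ofReal ((μ[rewardSum Y n τ|G]) ω - Zd ω) ≤ φ m ω := by
    intro m
    apply ENNReal.ofReal_le_ofReal
    calc (μ[rewardSum Y n τ|G]) ω - Zd ω
        ≤ (μ[rewardSum Y n τ|G]) ω - (μ[rewardSum Y n (tauApprox m τ δ)|G]) ω :=
          sub_le_sub_left (hm m) _
      _ ≤ |(μ[rewardSum Y n τ|G]) ω - (μ[rewardSum Y n (tauApprox m τ δ)|G]) ω| := le_abs_self _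
  have h1 : ENNReal.ofReal ((μ[rewardSum Y n τ|G]) ω - Zd ω) ≤ liminf (fun m => φ m ω) atTop :=
    le_liminf_of_le (by isBoundedDefault) (Filter.Eventually.of_forall hkey)
  rw [h0, le_zero_iff, ENNReal.ofReal_eq_zero] at h1
  exact sub_nonpos.mp h1

end
end
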